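/- arXiv:1511.04989 — 2 statements merged into one kernel-verified Lean document; each statement's English description precedes it below -/
import Mathlib

section
/- For a uniformly random permutation tableau of size n and for 1 ≤ k ≤ n−1, the probability that the k-th border edge is a south step and the (k+1)-th border edge is a west step equals (n−k+1)/n − (n−k)²/(n(n−1)). -/
open scoped BigOperators
open Nat

/-- The `t`-th border edge (1-indexed, read from northeast to southwest) of a Ferrers
shape with `cols` columns (rows given by the Young diagram `D`, possibly together with
extra empty rows) is a south step.  The south step belonging to row `i` occurs at
position `i + 1 + (cols - rowLen i)`. -/
def IsSouth (D : YoungDiagram) (cols t : ℕ) : Prop :=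
  ∃ i, t = i + 1 + (cols - D.rowLen i)

/-- Corners of a Ferrers diagram: cells whose right and bottom edges are both border
edges. -/
noncomputable def cornerCount (D : YoungDiagram) : ℕ :=
  {c : ℕ × ℕ | c ∈ D ∧ (c.1 + 1, c.2) ∉ D ∧ (c.1, c.2 + 1) ∉ D}.ncard

/-- A permutation tableau of size `n`: a Ferrers diagram of half-perimeter `n`
(`rows` rows, possibly empty, with the nonempty rows forming the Young diagram
`shape`) filled with `0`s and `1`s (`filling c = true` means the cell `c` contains
a `1`), such that every column contains at least one `1` and no `0` has a `1` above
it in its column and simultaneously a `1` to its left in its row. -/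
structure PermTableau (n : ℕ) where
  shape : YoungDiagram
  rows : ℕ
  rows_pos : 0 < rows
  rows_ge : shape.colLen 0 ≤ rows
  half : rows + shape.rowLen 0 = n
  filling : ℕ × ℕ → Bool
  support : ∀ c : ℕ × ℕ, c ∉ shape → filling c = false
  col_one : ∀ j < shape.rowLen 0, ∃ i, filling (i, j) = true
  avoid : ∀ i j : ℕ, (i, j) ∈ shape → filling (i, j) = false →
      (∃ i' < i, filling (i', j) = true) → ∀ j' < j, filling (i, j') = false

/-- The `t`-th border edge of a permutation tableau is a south step. -/
def PermTableau.south {n : ℕ} (T : PermTableau n) (t : ℕ) : Prop :=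
  IsSouth T.shape (T.shape.rowLen 0) t

/-- Row `i` of a permutation tableau is unrestricted: it contains no restricted `0`
(a `0` with a `1` above it in its column). -/
def PermTableau.unres {n : ℕ} (T : PermTableau n) (i : ℕ) : Prop :=
  ∀ j, (i, j) ∈ T.shape → T.filling (i, j) = false → ∀ i' < i, T.filling (i', j) = false

/-- The number of unrestricted rows of a permutation tableau. -/
noncomputable def PermTableau.U {n : ℕ} (T : PermTableau n) : ℕ :=
  {i | i < T.rows ∧ T.unres i}.ncard

/-- A tree-like tableau of size `n`: a Ferrers diagram of half-perimeter `n + 1`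
with pointed cells such that the top-left cell is pointed (the root point), every
row and every column contains a pointed cell, for every pointed cell all the cells
above it are empty or all the cells to its left are empty, and every non-root point
has a point above it or to its left (so that the points form a tree rooted at the
root point). -/
structure TreeLike (n : ℕ) where
  shape : YoungDiagram
  half : shape.colLen 0 + shape.rowLen 0 = n + 1
  point : ℕ × ℕ → Bool
  support : ∀ c : ℕ × ℕ, c ∉ shape → point c = false
  root : point (0, 0) = true
  row_point : ∀ i < shape.colLen 0, ∃ j, point (i, j) = true
  col_point : ∀ j < shape.rowLen 0, ∃ i, point (i, j) = true
  cond : ∀ i j : ℕ, point (i, j) = true →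
      (∀ i' < i, point (i', j) = false) ∨ (∀ j' < j, point (i, j') = false)
  conn : ∀ i j : ℕ, point (i, j) = true → (i, j) ≠ (0, 0) →
      (∃ i' < i, point (i', j) = true) ∨ (∃ j' < j, point (i, j') = true)

/-- The `t`-th border edge of a tree-like tableau is a south step (there are `n + 1`
border edges). -/
def TreeLike.south {n : ℕ} (T : TreeLike n) (t : ℕ) : Prop :=
  IsSouth T.shape (T.shape.rowLen 0) t

/-- A symmetric tree-like tableau of size `2 * n + 1`: a tree-like tableau invariant
under reflection about the main diagonal. -/
structure SymTreeLike (n : ℕ) extends TreeLike (2 * n + 1) where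
  sym_shape : toTreeLike.shape.transpose = toTreeLike.shape
  sym_point : ∀ i j : ℕ, toTreeLike.point (i, j) = toTreeLike.point (j, i)

/-- Cells of a shifted Ferrers diagram with `k` columns: on top a staircase of `k`
added rows, row `i` (for `i < k`) having the `i + 1` cells in columns `0, …, i`
with rightmost (diagonal) cell `(i, i)`, and below it the rows of the Ferrers
diagram `D` (row `k + i` of the shifted diagram is row `i` of `D`). -/
def BCell (k : ℕ) (D : YoungDiagram) (c : ℕ × ℕ) : Prop :=
  (c.1 < k ∧ c.2 ≤ c.1) ∨ (k ≤ c.1 ∧ (c.1 - k, c.2) ∈ D)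

/-- A type-B permutation tableau of size `n`: a shifted Ferrers diagram of
half-perimeter `n` (`cols` columns and `n - cols` lower rows, possibly empty, the
nonempty ones forming the Young diagram `shape`) filled with `0`s and `1`s such
that every column contains at least one `1`, no `0` has a `1` above it in its
column and simultaneously a `1` on its side in its row, and every row whose
diagonal cell contains a `0` is entirely filled with `0`s. -/
structure BTableau (n : ℕ) where
  cols : ℕ
  cols_le : cols ≤ n
  shape : YoungDiagram
  rows_ge : shape.colLen 0 ≤ n - cols
  width_le : shape.rowLen 0 ≤ cols
  filling : ℕ × ℕ → Bool
  support : ∀ c : ℕ × ℕ, ¬ BCell cols shape c → filling c = false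
  col_one : ∀ j < cols, ∃ i, filling (i, j) = true
  avoid : ∀ i j : ℕ, BCell cols shape (i, j) → filling (i, j) = false →
      (∃ i' < i, filling (i', j) = true) → ∀ j' < j, filling (i, j') = false
  diag : ∀ i < cols, filling (i, i) = false → ∀ j, filling (i, j) = false

/-- The `t`-th border edge of a type-B permutation tableau is a south step (there
are `n` border edges, those of the underlying, unshifted, Ferrers diagram). -/
def BTableau.south {n : ℕ} (B : BTableau n) (t : ℕ) : Prop :=
  IsSouth B.shape B.cols t

/-- Row `i` (among the `n` rows of the shifted diagram) of a type-B permutation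
tableau is unrestricted: it contains no restricted `0` and no diagonal `0`. -/
def BTableau.unres {n : ℕ} (B : BTableau n) (i : ℕ) : Prop :=
  (i < B.cols → B.filling (i, i) = true) ∧
  ∀ j, BCell B.cols B.shape (i, j) → B.filling (i, j) = false →
    ∀ i' < i, B.filling (i', j) = false

/-- The number of unrestricted rows of a type-B permutation tableau. -/
noncomputable def BTableau.U {n : ℕ} (B : BTableau n) : ℕ :=
  {i | i < n ∧ B.unres i}.ncard

/-- The number of corners of a type-B permutation tableau: occurrences of a south
border step immediately followed by a west border step. -/
noncomputable def BTableau.corners {n : ℕ} (B : BTableau n) : ℕ :=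
  {k | 1 ≤ k ∧ k + 1 ≤ n ∧ B.south k ∧ ¬ B.south (k + 1)}.ncard

/-! ### Auxiliary development for the corner probability theorem -/

section CornerAux

open Finset
open scoped Classical

namespace PermTableau

theorem ext' {n : ℕ} {T S : PermTableau n} (h1 : T.shape = S.shape)
    (h2 : T.rows = S.rows) (h3 : T.filling = S.filling) : T = S := by
  cases T; cases S; simp_all

end PermTableau

/-- Determine `rowLen` from a membership characterization. -/
lemma rowLen_eq_of {μ : YoungDiagram} {i c : ℕ} (h : ∀ j, (i, j) ∈ μ ↔ j < c) :
    μ.rowLen i = c := by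
  rcases Nat.lt_trichotomy (μ.rowLen i) c with h' | h' | h'
  · have := YoungDiagram.mem_iff_lt_rowLen.mp ((h (μ.rowLen i)).mpr h')
    omega
  · exact h'
  · have := (h (μ.rowLen i - 1)).mp (YoungDiagram.mem_iff_lt_rowLen.mpr (by omega))
    omega

lemma rowLen_eq_zero_of {μ : YoungDiagram} {i : ℕ} (h : (i, 0) ∉ μ) :
    μ.rowLen i = 0 := by
  apply rowLen_eq_of
  intro j
  simp only [Nat.not_lt_zero, iff_false]
  intro hj
  exact h (μ.up_left_mem (le_refl i) (Nat.zero_le j) hj)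

namespace PermTableau

variable {n : ℕ}

lemma rows_le (T : PermTableau n) : T.rows ≤ n := by
  have := T.half; omega

lemma cell_bound (T : PermTableau n) {c : ℕ × ℕ} (hc : c ∈ T.shape) :
    c.1 < n ∧ c.2 < n := by
  obtain ⟨i, j⟩ := c
  have hj : j < T.shape.rowLen i := YoungDiagram.mem_iff_lt_rowLen.mp hc
  have hj0 : T.shape.rowLen i ≤ T.shape.rowLen 0 := T.shape.rowLen_anti 0 i (Nat.zero_le i)
  have hi : i < T.shape.colLen j := YoungDiagram.mem_iff_lt_colLen.mp hc
  have hi0 : T.shape.colLen j ≤ T.shape.colLen 0 := T.shape.colLen_anti 0 j (Nat.zero_le j)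
  have h1 : 0 < T.shape.rowLen 0 := by omega
  have h2 : T.shape.colLen 0 ≤ T.rows := T.rows_ge
  have := T.half
  have := T.rows_pos
  omega

instance instFinite : Finite (PermTableau n) := by
  rcases Nat.eq_zero_or_pos n with rfl | hn
  · have : IsEmpty (PermTableau 0) := ⟨fun T => by have := T.half; have := T.rows_pos; omega⟩
    infer_instance
  · apply Finite.of_injective (fun T : PermTableau n =>
      ((⟨T.rows, by have := T.rows_le; omega⟩ : Fin (n + 1)),
       (Finset.univ.filter (fun c : Fin n × Fin n => ((c.1 : ℕ), (c.2 : ℕ)) ∈ T.shape)),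
       (Finset.univ.filter (fun c : Fin n × Fin n => T.filling ((c.1 : ℕ), (c.2 : ℕ)) = true))))
    intro T S h
    simp only [Prod.mk.injEq, Fin.mk.injEq] at h
    obtain ⟨h1, h2, h3⟩ := h
    have hshape : T.shape = S.shape := by
      ext ⟨i, j⟩
      constructor
      · intro hm
        have hb := T.cell_bound hm
        have := Finset.ext_iff.mp h2 (⟨i, hb.1⟩, ⟨j, hb.2⟩)
        simp only [Finset.mem_filter, Finset.mem_univ, true_and] at this
        exact this.mp hm
      · intro hm
        have hb := S.cell_bound hm
        have := Finset.ext_iff.mp h2 (⟨i, hb.1⟩, ⟨j, hb.2⟩)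
        simp only [Finset.mem_filter, Finset.mem_univ, true_and] at this
        exact this.mpr hm
    refine PermTableau.ext' hshape h1 ?_
    funext c
    obtain ⟨i, j⟩ := c
    by_cases hm : (i, j) ∈ T.shape
    · have hb := T.cell_bound hm
      have := Finset.ext_iff.mp h3 (⟨i, hb.1⟩, ⟨j, hb.2⟩)
      simp only [Finset.mem_filter, Finset.mem_univ, true_and] at this
      cases hT : T.filling (i, j) <;> cases hS : S.filling (i, j) <;> simp_all
    · rw [T.support _ hm, S.support _ (by rwa [← hshape])]

noncomputable instance instFintype : Fintype (PermTableau n) := Fintype.ofFinite _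

/-- The set of unrestricted rows, as a `Finset`. -/
noncomputable def US (T : PermTableau n) : Finset ℕ :=
  (Finset.range T.rows).filter T.unres

lemma mem_US {T : PermTableau n} {i : ℕ} : i ∈ T.US ↔ i < T.rows ∧ T.unres i := by
  simp [US]

end PermTableau

namespace PermTableau

variable {m : ℕ}

/-- Add an empty row at the bottom (a south step at the end of the border). -/
def addRow (T : PermTableau m) : PermTableau (m + 1) where
  shape := T.shape
  rows := T.rows + 1
  rows_pos := Nat.succ_pos _
  rows_ge := le_trans T.rows_ge (Nat.le_succ _)
  half := by have := T.half; omega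
  filling := T.filling
  support := T.support
  col_one := T.col_one
  avoid := T.avoid

@[simp] lemma addRow_shape (T : PermTableau m) : (addRow T).shape = T.shape := rfl
@[simp] lemma addRow_rows (T : PermTableau m) : (addRow T).rows = T.rows + 1 := rfl
@[simp] lemma addRow_filling (T : PermTableau m) : (addRow T).filling = T.filling := rfl

lemma south_addRow (T : PermTableau m) (t : ℕ) : (addRow T).south t ↔ T.south t := Iff.rfl

lemma rowLen_rows (T : PermTableau m) {i : ℕ} (hi : T.rows ≤ i) : T.shape.rowLen i = 0 := by
  apply rowLen_eq_zero_of
  intro hmem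
  have := YoungDiagram.mem_iff_lt_colLen.mp hmem
  have := T.rows_ge
  omega

lemma south_addRow_last (T : PermTableau m) : (addRow T).south (m + 1) := by
  refine ⟨T.rows, ?_⟩
  have h0 : T.shape.rowLen T.rows = 0 := T.rowLen_rows (le_refl _)
  have := T.half
  simp only [addRow_shape, h0, Nat.sub_zero]
  omega

lemma unres_addRow (T : PermTableau m) (i : ℕ) : (addRow T).unres i ↔ T.unres i := Iff.rfl

lemma unres_of_rows_le (T : PermTableau m) {i : ℕ} (hi : T.rows ≤ i) : T.unres i := by
  intro j hj
  exfalso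
  have := YoungDiagram.mem_iff_lt_colLen.mp hj
  have h2 := T.shape.colLen_anti 0 j (Nat.zero_le j)
  have := T.rows_ge
  omega

lemma US_addRow (T : PermTableau m) : (addRow T).US = insert T.rows T.US := by
  ext i
  simp only [mem_US, Finset.mem_insert, addRow_rows, unres_addRow]
  constructor
  · rintro ⟨h1, h2⟩
    rcases Nat.lt_succ_iff_lt_or_eq.mp h1 with h | h
    · exact Or.inr ⟨h, h2⟩
    · exact Or.inl h
  · rintro (rfl | ⟨h1, h2⟩)
    · exact ⟨Nat.lt_succ_self _, T.unres_of_rows_le (le_refl _)⟩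
    · exact ⟨Nat.lt_succ_of_lt h1, h2⟩

lemma US_addRow_card (T : PermTableau m) : (addRow T).US.card = T.US.card + 1 := by
  rw [US_addRow, Finset.card_insert_of_notMem]
  intro h
  exact absurd (mem_US.mp h).1 (lt_irrefl _)

end PermTableau

lemma colLen_eq_of {μ : YoungDiagram} {j c : ℕ} (h : ∀ i, (i, j) ∈ μ ↔ i < c) :
    μ.colLen j = c := by
  rcases Nat.lt_trichotomy (μ.colLen j) c with h' | h' | h'
  · have := YoungDiagram.mem_iff_lt_colLen.mp ((h (μ.colLen j)).mpr h')
    omega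
  · exact h'
  · have := (h (μ.colLen j - 1)).mp (YoungDiagram.mem_iff_lt_colLen.mpr (by omega))
    omega

namespace PermTableau

variable {m : ℕ}

/-- The shape obtained by prepending a full column of height `r`. -/
def colShape (r : ℕ) (D : YoungDiagram) (hD : D.colLen 0 ≤ r) : YoungDiagram where
  cells := (Finset.range r ×ˢ Finset.range 1) ∪
    D.cells.map ⟨fun c => (c.1, c.2 + 1), fun a b h => by
      obtain ⟨a1, a2⟩ := a; obtain ⟨b1, b2⟩ := b; simpa using h⟩
  isLowerSet := by
    rintro ⟨i, j⟩ ⟨i', j'⟩ hle hc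
    rw [Prod.mk_le_mk] at hle
    simp only [Finset.coe_union, Set.mem_union, Finset.coe_product, Set.mem_prod,
      Finset.mem_coe, Finset.mem_range, Finset.mem_map, Function.Embedding.coeFn_mk,
      Prod.mk.injEq, Set.mem_setOf_eq] at hc ⊢
    rcases hc with ⟨h1, h2⟩ | ⟨⟨a1, a2⟩, ha, he1, he2⟩
    · exact Or.inl ⟨by omega, by omega⟩
    · rcases Nat.eq_zero_or_pos j' with hj' | hj'
      · refine Or.inl ⟨?_, by omega⟩
        have hmem : (a1, a2) ∈ D := ha
        have h1 := YoungDiagram.mem_iff_lt_colLen.mp hmem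
        have h2 := D.colLen_anti 0 a2 (Nat.zero_le a2)
        omega
      · refine Or.inr ⟨(i', j' - 1), ?_, Prod.ext rfl (by show j' - 1 + 1 = j'; omega)⟩
        have hmem : (a1, a2) ∈ D := ha
        exact D.isLowerSet (a := (a1, a2)) (by rw [Prod.mk_le_mk]; omega) hmem

lemma mem_colShape {r : ℕ} {D : YoungDiagram} {hD : D.colLen 0 ≤ r} {i j : ℕ} :
    (i, j) ∈ colShape r D hD ↔ (j = 0 ∧ i < r) ∨ (0 < j ∧ (i, j - 1) ∈ D) := by
  show (i, j) ∈ (colShape r D hD).cells ↔ _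
  simp only [colShape, Finset.mem_union, Finset.mem_product, Finset.mem_range,
    Finset.mem_map, Function.Embedding.coeFn_mk, Prod.mk.injEq]
  constructor
  · rintro (⟨h1, h2⟩ | ⟨⟨a1, a2⟩, ha, rfl, rfl⟩)
    · exact Or.inl ⟨by omega, h1⟩
    · exact Or.inr ⟨by omega, by simpa using ha⟩
  · rintro (⟨rfl, h2⟩ | ⟨h1, h2⟩)
    · exact Or.inl ⟨h2, by omega⟩
    · exact Or.inr ⟨(i, j - 1), h2, Prod.ext rfl (by show j - 1 + 1 = j; omega)⟩

lemma colShape_rowLen_lt {r : ℕ} {D : YoungDiagram} {hD : D.colLen 0 ≤ r} {i : ℕ}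
    (hi : i < r) : (colShape r D hD).rowLen i = D.rowLen i + 1 := by
  apply rowLen_eq_of
  intro j
  rw [mem_colShape]
  cases j with
  | zero => simp [hi]
  | succ jj =>
    simp only [Nat.succ_ne_zero, false_and, Nat.succ_sub_one, false_or]
    rw [YoungDiagram.mem_iff_lt_rowLen]
    omega

lemma colShape_rowLen_ge {r : ℕ} {D : YoungDiagram} {hD : D.colLen 0 ≤ r} {i : ℕ}
    (hi : r ≤ i) : (colShape r D hD).rowLen i = 0 := by
  apply rowLen_eq_zero_of
  rw [mem_colShape]
  rintro (⟨_, h⟩ | ⟨h, _⟩) <;> omega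

lemma colShape_colLen {r : ℕ} {D : YoungDiagram} {hD : D.colLen 0 ≤ r} :
    (colShape r D hD).colLen 0 = r := by
  apply colLen_eq_of
  intro i
  rw [mem_colShape]
  omega

lemma memUSP_subset (T : PermTableau m) (A : Finset ℕ)
    (hA : A ∈ T.US.powerset.filter (fun B => B.Nonempty)) :
    ∀ i ∈ A, i < T.rows ∧ T.unres i := by
  intro i hi
  simp only [Finset.mem_filter, Finset.mem_powerset] at hA
  exact mem_US.mp (hA.1 hi)

lemma memUSP_nonempty (T : PermTableau m) (A : Finset ℕ)
    (hA : A ∈ T.US.powerset.filter (fun B => B.Nonempty)) : A.Nonempty := by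
  simp only [Finset.mem_filter, Finset.mem_powerset] at hA
  exact hA.2

/-- Add a full column at the left of the tableau (a west step at the end of the
border), with `1`s exactly in the rows of `A`. -/
def addCol (T : PermTableau m) (A : Finset ℕ)
    (hA : A ∈ T.US.powerset.filter (fun B => B.Nonempty)) : PermTableau (m + 1) where
  shape := colShape T.rows T.shape T.rows_ge
  rows := T.rows
  rows_pos := T.rows_pos
  rows_ge := le_of_eq colShape_colLen
  half := by
    have h1 : (colShape T.rows T.shape T.rows_ge).rowLen 0 = T.shape.rowLen 0 + 1 :=
      colShape_rowLen_lt T.rows_pos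
    have := T.half
    omega
  filling := fun c => if c.2 = 0 then decide (c.1 ∈ A) else T.filling (c.1, c.2 - 1)
  support := by
    rintro ⟨i, j⟩ hc
    rw [mem_colShape] at hc
    push_neg at hc
    cases j with
    | zero =>
      simp only [if_pos, decide_eq_false_iff_not]
      intro hiA
      exact absurd ((memUSP_subset T A hA i hiA).1) (by have := hc.1 rfl; omega)
    | succ jj =>
      simp only [Nat.succ_ne_zero, if_false, Nat.succ_sub_one, if_neg]
      exact T.support _ (hc.2 (Nat.succ_pos _))
  col_one := by
    intro j hj
    have h1 : (colShape T.rows T.shape T.rows_ge).rowLen 0 = T.shape.rowLen 0 + 1 :=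
      colShape_rowLen_lt T.rows_pos
    cases j with
    | zero =>
      obtain ⟨i, hi⟩ := memUSP_nonempty T A hA
      exact ⟨i, by simp [hi]⟩
    | succ jj =>
      rw [h1] at hj
      obtain ⟨i, hi⟩ := T.col_one jj (by omega)
      exact ⟨i, by simpa using hi⟩
  avoid := by
    intro i j hmem h0 h1 j' hj'
    cases j with
    | zero => omega
    | succ jj =>
      rw [mem_colShape] at hmem
      have hmem' : (i, jj) ∈ T.shape := by
        rcases hmem with ⟨h, _⟩ | ⟨_, h⟩
        · exact absurd h (Nat.succ_ne_zero _)
        · simpa using h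
      simp only [Nat.succ_ne_zero, if_false, Nat.succ_sub_one, if_neg] at h0
      obtain ⟨i', hi', hfi'⟩ := h1
      simp only [Nat.succ_ne_zero, if_false, Nat.succ_sub_one, if_neg] at hfi'
      cases j' with
      | zero =>
        simp only [if_pos, decide_eq_false_iff_not]
        intro hiA
        have hunres := (memUSP_subset T A hA i hiA).2
        exact absurd hfi' (by simpa using hunres jj hmem' h0 i' hi')
      | succ jj' =>
        simp only [Nat.succ_ne_zero, if_false, Nat.succ_sub_one, if_neg]
        exact T.avoid i jj hmem' h0 ⟨i', hi', hfi'⟩ jj' (by omega)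

@[simp] lemma addCol_shape (T : PermTableau m) (A : Finset ℕ)
    (hA : A ∈ T.US.powerset.filter (fun B : Finset ℕ => B.Nonempty)) :
    (addCol T A hA).shape = colShape T.rows T.shape T.rows_ge := rfl
@[simp] lemma addCol_rows (T : PermTableau m) (A : Finset ℕ)
    (hA : A ∈ T.US.powerset.filter (fun B : Finset ℕ => B.Nonempty)) :
    (addCol T A hA).rows = T.rows := rfl
@[simp] lemma addCol_filling (T : PermTableau m) (A : Finset ℕ)
    (hA : A ∈ T.US.powerset.filter (fun B : Finset ℕ => B.Nonempty)) (c : ℕ × ℕ) :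
    (addCol T A hA).filling c
      = if c.2 = 0 then decide (c.1 ∈ A) else T.filling (c.1, c.2 - 1) := rfl

lemma addCol_rowLen0 (T : PermTableau m) (A : Finset ℕ)
    (hA : A ∈ T.US.powerset.filter (fun B : Finset ℕ => B.Nonempty)) :
    (addCol T A hA).shape.rowLen 0 = T.shape.rowLen 0 + 1 :=
  colShape_rowLen_lt (hD := T.rows_ge) T.rows_pos

lemma south_addCol (T : PermTableau m) (A : Finset ℕ)
    (hA : A ∈ T.US.powerset.filter (fun B => B.Nonempty)) {t : ℕ} (ht : t ≤ m) :
    (addCol T A hA).south t ↔ T.south t := by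
  have h0 := addCol_rowLen0 T A hA
  have hhalf := T.half
  constructor
  · rintro ⟨i, hi⟩
    rw [show ((addCol T A hA).shape.rowLen 0) = T.shape.rowLen 0 + 1 from h0] at hi
    by_cases hir : i < T.rows
    · have h1 : (addCol T A hA).shape.rowLen i = T.shape.rowLen i + 1 :=
        colShape_rowLen_lt (hD := T.rows_ge) hir
      have h2 : T.shape.rowLen i ≤ T.shape.rowLen 0 := T.shape.rowLen_anti 0 i (Nat.zero_le i)
      refine ⟨i, ?_⟩
      rw [h1] at hi
      omega
    · have h1 : (addCol T A hA).shape.rowLen i = 0 := colShape_rowLen_ge (hD := T.rows_ge) (by omega)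
      rw [h1] at hi
      omega
  · rintro ⟨i, hi⟩
    by_cases hir : i < T.rows
    · have h1 : (addCol T A hA).shape.rowLen i = T.shape.rowLen i + 1 :=
        colShape_rowLen_lt (hD := T.rows_ge) hir
      have h2 : T.shape.rowLen i ≤ T.shape.rowLen 0 := T.shape.rowLen_anti 0 i (Nat.zero_le i)
      refine ⟨i, ?_⟩
      rw [h0, h1]
      omega
    · have h1 : T.shape.rowLen i = 0 := T.rowLen_rows (by omega)
      rw [h1] at hi
      omega

lemma south_addCol_last (T : PermTableau m) (A : Finset ℕ)
    (hA : A ∈ T.US.powerset.filter (fun B => B.Nonempty)) :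
    ¬ (addCol T A hA).south (m + 1) := by
  have h0 := addCol_rowLen0 T A hA
  have hhalf := T.half
  rintro ⟨i, hi⟩
  rw [show ((addCol T A hA).shape.rowLen 0) = T.shape.rowLen 0 + 1 from h0] at hi
  by_cases hir : i < T.rows
  · have h1 : (addCol T A hA).shape.rowLen i = T.shape.rowLen i + 1 :=
      colShape_rowLen_lt (hD := T.rows_ge) hir
    have h2 : T.shape.rowLen i ≤ T.shape.rowLen 0 := T.shape.rowLen_anti 0 i (Nat.zero_le i)
    rw [h1] at hi
    omega
  · have h1 : (addCol T A hA).shape.rowLen i = 0 := colShape_rowLen_ge (hD := T.rows_ge) (by omega)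
    rw [h1] at hi
    omega

lemma unres_addCol (T : PermTableau m) (A : Finset ℕ)
    (hA : A ∈ T.US.powerset.filter (fun B => B.Nonempty)) {i : ℕ} (hi : i < T.rows) :
    (addCol T A hA).unres i ↔ (i ∈ A ∨ (T.unres i ∧ ∀ a ∈ A, i < a)) := by
  constructor
  · intro hU
    by_cases hiA : i ∈ A
    · exact Or.inl hiA
    · refine Or.inr ⟨?_, ?_⟩
      · intro j hj hf0 i' hi'
        have hmem : (i, j + 1) ∈ (addCol T A hA).shape := by
          rw [addCol_shape, mem_colShape]; exact Or.inr ⟨Nat.succ_pos _, by simpa using hj⟩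
        have := hU (j + 1) hmem (by simpa using hf0) i' hi'
        simpa using this
      · intro a ha
        have hmem : (i, 0) ∈ (addCol T A hA).shape := by
          rw [addCol_shape, mem_colShape]; exact Or.inl ⟨rfl, hi⟩
        have hf0 : (addCol T A hA).filling (i, 0) = false := by simp [hiA]
        have hall := hU 0 hmem hf0
        have ha' := memUSP_subset T A hA a ha
        rcases Nat.lt_trichotomy i a with h | h | h
        · exact h
        · exact absurd (h ▸ ha) hiA
        · have := hall a h
          simp only [addCol_filling, if_pos, decide_eq_false_iff_not] at this
          exact absurd ha this
  · rintro (hiA | ⟨hU, hlt⟩) <;> intro j hj hf0 i' hi'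
    · cases j with
      | zero =>
        exfalso
        simp only [addCol_filling, if_pos, decide_eq_false_iff_not] at hf0
        exact hf0 hiA
      | succ jj =>
        have hj' : (i, jj) ∈ T.shape := by
          rw [addCol_shape, mem_colShape] at hj
          rcases hj with ⟨h, _⟩ | ⟨_, h⟩
          · exact absurd h (Nat.succ_ne_zero _)
          · simpa using h
        simp only [addCol_filling, Nat.succ_ne_zero, if_false, Nat.succ_sub_one, if_neg] at hf0 ⊢
        exact (memUSP_subset T A hA i hiA).2 jj hj' hf0 i' hi'
    · cases j with
      | zero =>
        simp only [addCol_filling, if_pos, decide_eq_false_iff_not]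
        intro hi'A
        exact absurd hi' (by have := hlt i' hi'A; omega)
      | succ jj =>
        have hj' : (i, jj) ∈ T.shape := by
          rw [addCol_shape, mem_colShape] at hj
          rcases hj with ⟨h, _⟩ | ⟨_, h⟩
          · exact absurd h (Nat.succ_ne_zero _)
          · simpa using h
        simp only [addCol_filling, Nat.succ_ne_zero, if_false, Nat.succ_sub_one, if_neg] at hf0 ⊢
        exact hU jj hj' hf0 i' hi'

lemma US_addCol (T : PermTableau m) (A : Finset ℕ)
    (hA : A ∈ T.US.powerset.filter (fun B : Finset ℕ => B.Nonempty)) :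
    (addCol T A hA).US = A ∪ T.US.filter (fun i => ∀ a ∈ A, i < a) := by
  ext i
  simp only [mem_US, addCol_rows, Finset.mem_union, Finset.mem_filter]
  constructor
  · rintro ⟨h1, h2⟩
    rcases (unres_addCol T A hA h1).mp h2 with h | ⟨h3, h4⟩
    · exact Or.inl h
    · exact Or.inr ⟨⟨h1, h3⟩, h4⟩
  · rintro (h | ⟨⟨h1, h2⟩, h3⟩)
    · have := memUSP_subset T A hA i h
      exact ⟨this.1, (unres_addCol T A hA this.1).mpr (Or.inl h)⟩
    · exact ⟨h1, (unres_addCol T A hA h1).mpr (Or.inr ⟨h2, h3⟩)⟩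

lemma US_addCol_card (T : PermTableau m) (A : Finset ℕ)
    (hA : A ∈ T.US.powerset.filter (fun B : Finset ℕ => B.Nonempty)) :
    (addCol T A hA).US.card = A.card + (T.US.filter (fun i => ∀ a ∈ A, i < a)).card := by
  rw [US_addCol, Finset.card_union_of_disjoint]
  rw [Finset.disjoint_left]
  intro a ha ha'
  have := (Finset.mem_filter.mp ha').2 a ha
  omega

end PermTableau
namespace PermTableau

variable {m : ℕ}

/-- Extension data for growing a tableau by one border edge. -/
def ExtIdx (T : PermTableau m) : Type :=
  Option {A : Finset ℕ // A ∈ T.US.powerset.filter (fun B => B.Nonempty)}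

noncomputable instance (T : PermTableau m) : Fintype (ExtIdx T) := by
  unfold ExtIdx; infer_instance

/-- Glue an extension onto a tableau. -/
noncomputable def glue (x : Σ T : PermTableau m, ExtIdx T) : PermTableau (m + 1) :=
  match x with
  | ⟨T, none⟩ => addRow T
  | ⟨T, some ⟨A, hA⟩⟩ => addCol T A hA

lemma glue_injective : Function.Injective (glue (m := m)) := by
  rintro ⟨T1, e1⟩ ⟨T2, e2⟩ h
  rcases e1 with _ | ⟨A1, hA1⟩ <;> rcases e2 with _ | ⟨A2, hA2⟩
  · -- none, none
    have h' : addRow T1 = addRow T2 := h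
    have hs : T1.shape = T2.shape := congrArg (fun S : PermTableau (m+1) => S.shape) h'
    have hr : T1.rows = T2.rows := by
      have := congrArg (fun S : PermTableau (m+1) => S.rows) h'; simpa using this
    have hf : T1.filling = T2.filling := congrArg (fun S : PermTableau (m+1) => S.filling) h'
    have : T1 = T2 := ext' hs hr hf
    subst this
    rfl
  · -- none, some : impossible
    exfalso
    have h' : addRow T1 = addCol T2 A2 hA2 := h
    have h1 := congrArg (fun S => S.shape.colLen 0) h'
    have h2 := congrArg (fun S : PermTableau (m+1) => S.rows) h'
    simp only [addRow_shape, addRow_rows, addCol_shape, addCol_rows] at h1 h2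
    rw [colShape_colLen] at h1
    have := T1.rows_ge
    omega
  · exfalso
    have h' : addCol T1 A1 hA1 = addRow T2 := h
    have h1 := congrArg (fun S => S.shape.colLen 0) h'
    have h2 := congrArg (fun S : PermTableau (m+1) => S.rows) h'
    simp only [addRow_shape, addRow_rows, addCol_shape, addCol_rows] at h1 h2
    rw [colShape_colLen] at h1
    have := T2.rows_ge
    omega
  · -- some, some
    have h' : addCol T1 A1 hA1 = addCol T2 A2 hA2 := h
    have hr : T1.rows = T2.rows := by
      have := congrArg (fun S : PermTableau (m+1) => S.rows) h'; simpa using this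
    have hs : T1.shape = T2.shape := by
      ext ⟨i, j⟩
      have h1 := congrArg (fun S : PermTableau (m+1) => S.shape) h'
      simp only [addCol_shape] at h1
      have h2 : ((i, j + 1) ∈ colShape T1.rows T1.shape T1.rows_ge)
          ↔ ((i, j + 1) ∈ colShape T2.rows T2.shape T2.rows_ge) := by rw [h1]
      simpa [mem_colShape] using h2
    have hf : T1.filling = T2.filling := by
      funext c
      obtain ⟨i, j⟩ := c
      have h1 := congrArg (fun S => S.filling (i, j + 1)) h'
      simpa using h1
    have hT : T1 = T2 := ext' hs hr hf
    subst hT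
    have hAA : A1 = A2 := by
      ext i
      have h1 := congrArg (fun S => S.filling (i, 0)) h'
      simp only [addCol_filling] at h1
      rw [← decide_eq_decide]
      exact h1
    subst hAA
    rfl

lemma glue_surjective (hm : 1 ≤ m) : Function.Surjective (glue (m := m)) := by
  intro T
  by_cases hcase : T.shape.colLen 0 = T.rows
  · -- last step west : T is an `addCol`
    have hr0 : 0 < T.shape.rowLen 0 := by
      have : (0, 0) ∈ T.shape := YoungDiagram.mem_iff_lt_colLen.mpr (by
        rw [hcase]; exact T.rows_pos)
      exact YoungDiagram.mem_iff_lt_rowLen.mp this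
    -- the shape with first column deleted
    set D' : YoungDiagram := {
      cells := (T.shape.cells.filter (fun c => 0 < c.2)).image (fun c => (c.1, c.2 - 1))
      isLowerSet := by
        rintro ⟨i, j⟩ ⟨i', j'⟩ hle hc
        rw [Prod.mk_le_mk] at hle
        simp only [Finset.coe_image, Set.mem_image, Finset.mem_coe, Finset.mem_filter,
          Prod.mk.injEq] at hc ⊢
        obtain ⟨⟨a1, a2⟩, ⟨ha, ha2⟩, he1, he2⟩ := hc
        have hmem : (i, j + 1) ∈ T.shape := by
          have : (a1, a2) ∈ T.shape := ha
          have : ((i, j + 1) : ℕ × ℕ) = (a1, a2) := by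
            simp only [Prod.mk.injEq]; omega
          rwa [this]
        have hmem' : (i', j' + 1) ∈ T.shape :=
          T.shape.isLowerSet (a := (i, j + 1)) (by rw [Prod.mk_le_mk]; omega) hmem
        exact ⟨(i', j' + 1), ⟨hmem', by omega⟩, rfl, by omega⟩ } with hD'
    have memD' : ∀ i j : ℕ, ((i, j) ∈ D') ↔ ((i, j + 1) ∈ T.shape) := by
      intro i j
      show (i, j) ∈ D'.cells ↔ _
      rw [hD']
      simp only [Finset.mem_image, Finset.mem_filter, Prod.mk.injEq]
      constructor
      · rintro ⟨⟨a1, a2⟩, ⟨ha, ha2⟩, he1, he2⟩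
        have : ((i, j + 1) : ℕ × ℕ) = (a1, a2) := by simp only [Prod.mk.injEq]; omega
        rw [this]; exact ha
      · intro hmem
        exact ⟨(i, j + 1), ⟨hmem, by omega⟩, rfl, by omega⟩
    have hrow0 : D'.rowLen 0 = T.shape.rowLen 0 - 1 := by
      apply rowLen_eq_of
      intro j
      rw [memD', YoungDiagram.mem_iff_lt_rowLen]
      omega
    have hcolD' : D'.colLen 0 ≤ T.rows := by
      by_contra hlt
      push_neg at hlt
      have h1 : (T.rows, 0) ∈ D' := YoungDiagram.mem_iff_lt_colLen.mpr hlt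
      rw [memD'] at h1
      have h2 := YoungDiagram.mem_iff_lt_colLen.mp h1
      have h3 := T.shape.colLen_anti 0 (0 + 1) (by omega)
      omega
    set T' : PermTableau m := {
      shape := D'
      rows := T.rows
      rows_pos := T.rows_pos
      rows_ge := hcolD'
      half := by have := T.half; omega
      filling := fun c => T.filling (c.1, c.2 + 1)
      support := by
        rintro ⟨i, j⟩ hc
        exact T.support (i, j + 1) (by rwa [memD'] at hc)
      col_one := by
        intro j hj
        rw [hrow0] at hj
        obtain ⟨i, hi⟩ := T.col_one (j + 1) (by omega)
        exact ⟨i, hi⟩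
      avoid := by
        intro i j hmem hf0 h1 j' hj'
        obtain ⟨i', hi', hf1⟩ := h1
        exact T.avoid i (j + 1) ((memD' i j).mp hmem) hf0 ⟨i', hi', hf1⟩ (j' + 1) (by omega)
      } with hT'
    have hA : (Finset.range T.rows).filter (fun i => T.filling (i, 0) = true)
        ∈ T'.US.powerset.filter (fun B => B.Nonempty) := by
      simp only [Finset.mem_filter, Finset.mem_powerset]
      constructor
      · intro i hi
        simp only [Finset.mem_filter, Finset.mem_range] at hi
        rw [mem_US]
        refine ⟨hi.1, ?_⟩
        intro j hj hf0 i' hi'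
        by_contra hne
        rw [Bool.not_eq_false] at hne
        have hj2 : (i, j) ∈ D' := hj
        have hf02 : T.filling (i, j + 1) = false := hf0
        have hne2 : T.filling (i', j + 1) = true := hne
        have := T.avoid i (j + 1) ((memD' i j).mp hj2) hf02 ⟨i', hi', hne2⟩ 0 (Nat.succ_pos _)
        rw [this] at hi
        simp at hi
      · obtain ⟨i, hi⟩ := T.col_one 0 hr0
        refine ⟨i, ?_⟩
        simp only [Finset.mem_filter, Finset.mem_range]
        refine ⟨?_, hi⟩
        by_contra hge
        push_neg at hge
        have : (i, 0) ∉ T.shape := by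
          rw [YoungDiagram.mem_iff_lt_colLen, hcase]
          omega
        rw [T.support _ this] at hi
        simp at hi
    refine ⟨⟨T', some ⟨(Finset.range T.rows).filter (fun i => T.filling (i, 0) = true), hA⟩⟩, ?_⟩
    -- gluing gives back T
    show addCol T' ((Finset.range T.rows).filter (fun i => T.filling (i, 0) = true)) hA = T
    refine ext' ?_ rfl ?_
    · ext ⟨i, j⟩
      show ((i, j) ∈ colShape T'.rows T'.shape T'.rows_ge) ↔ ((i, j) ∈ T.shape)
      rw [mem_colShape]
      cases j with
      | zero =>
        have hmem : (i, 0) ∈ T.shape ↔ i < T.rows := by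
          rw [YoungDiagram.mem_iff_lt_colLen, hcase]
        simp [hmem]
        rfl
      | succ jj =>
        have hmm : ((i, jj) ∈ T'.shape) ↔ ((i, jj + 1) ∈ T.shape) := memD' i jj
        simp only [Nat.succ_ne_zero, false_and, Nat.succ_sub_one, false_or]
        rw [show ((i, jj) ∈ T'.shape) = ((i, jj) ∈ D') from rfl] at hmm
        rw [hmm]
        simp
    · funext c
      obtain ⟨i, j⟩ := c
      cases j with
      | zero =>
        rw [addCol_filling]
        simp only [if_pos]
        by_cases hmemr : i < T.rows
        · cases hf : T.filling (i, 0) with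
          | false => simp [Finset.mem_filter, hf]
          | true => simp [Finset.mem_filter, Finset.mem_range, hf, hmemr]
        · have h0 : (i, 0) ∉ T.shape := by
            rw [YoungDiagram.mem_iff_lt_colLen, hcase]
            omega
          rw [T.support _ h0]
          simp [Finset.mem_filter, Finset.mem_range]
          omega
      | succ jj =>
        rw [addCol_filling]
        simp
        rfl
  · -- last step south : T is an `addRow`
    have hlt : T.shape.colLen 0 < T.rows := lt_of_le_of_ne T.rows_ge hcase
    have hrows2 : 2 ≤ T.rows := by
      by_contra hr
      push_neg at hr
      have hr1 : T.rows = 1 := by have := T.rows_pos; omega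
      have hc0 : T.shape.colLen 0 = 0 := by omega
      have hL0 : T.shape.rowLen 0 = 0 := by
        apply rowLen_eq_zero_of
        rw [YoungDiagram.mem_iff_lt_colLen]
        omega
      have := T.half
      omega
    refine ⟨⟨{
      shape := T.shape
      rows := T.rows - 1
      rows_pos := by omega
      rows_ge := by omega
      half := by have := T.half; omega
      filling := T.filling
      support := T.support
      col_one := T.col_one
      avoid := T.avoid }, none⟩, ?_⟩
    show addRow _ = T
    refine ext' rfl ?_ rfl
    show T.rows - 1 + 1 = T.rows
    omega

lemma glue_bijective (hm : 1 ≤ m) : Function.Bijective (glue (m := m)) :=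
  ⟨glue_injective, glue_surjective hm⟩

lemma sum_glue {M : Type*} [AddCommMonoid M] (hm : 1 ≤ m) (f : PermTableau (m + 1) → M) :
    ∑ T : PermTableau (m + 1), f T
      = ∑ T : PermTableau m, (f (addRow T) +
          ∑ a : {A : Finset ℕ // A ∈ T.US.powerset.filter (fun B => B.Nonempty)},
            f (addCol T a.1 a.2)) := by
  rw [← Function.Bijective.sum_comp (glue_bijective hm) f]
  rw [← Finset.univ_sigma_univ, Finset.sum_sigma]
  refine Finset.sum_congr rfl ?_
  intro T _
  have : ∀ e : ExtIdx T, True := fun _ => trivial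
  rw [show (∑ e : ExtIdx T, f (glue ⟨T, e⟩))
      = ∑ e : Option {A : Finset ℕ // A ∈ T.US.powerset.filter (fun B => B.Nonempty)},
        f (glue ⟨T, e⟩) from rfl]
  rw [Fintype.sum_option]
  congr 1

end PermTableau
/-! ### Subset sums -/

lemma sum_powerset_pow (q : ℕ) (S : Finset ℕ) :
    ∑ B ∈ S.powerset, q ^ B.card = (q + 1) ^ S.card := by
  induction S using Finset.induction_on with
  | empty => simp
  | @insert a S ha ih =>
    have hinj : ∀ x ∈ S.powerset, ∀ y ∈ S.powerset, insert a x = insert a y → x = y := by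
      intro x hx y hy hxy
      have hax : a ∉ x := fun hc => ha ((Finset.mem_powerset.mp hx) hc)
      have hay : a ∉ y := fun hc => ha ((Finset.mem_powerset.mp hy) hc)
      ext b
      by_cases hb : b = a
      · subst hb; simp [hax, hay]
      · have := Finset.ext_iff.mp hxy b
        simp only [Finset.mem_insert] at this
        constructor
        · intro hbx; rcases this.mp (Or.inr hbx) with h | h
          · exact absurd h hb
          · exact h
        · intro hby; rcases this.mpr (Or.inr hby) with h | h
          · exact absurd h hb
          · exact h
    have hdisj : Disjoint S.powerset (S.powerset.image (insert a)) := by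
      rw [Finset.disjoint_right]
      intro B hB hB'
      simp only [Finset.mem_image] at hB
      obtain ⟨C, hC, rfl⟩ := hB
      exact ha ((Finset.mem_powerset.mp hB') (Finset.mem_insert_self a C))
    rw [Finset.powerset_insert, Finset.sum_union hdisj, Finset.sum_image hinj]
    have h2 : ∑ x ∈ S.powerset, q ^ (insert a x).card = q * (q + 1) ^ S.card := by
      have h3 : ∀ B ∈ S.powerset, q ^ (insert a B).card = q * q ^ B.card := by
        intro B hB
        rw [Finset.card_insert_of_notMem (fun hc => ha ((Finset.mem_powerset.mp hB) hc))]
        ring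
      rw [Finset.sum_congr rfl h3, ← Finset.mul_sum, ih]
    rw [h2, ih, Finset.card_insert_of_notMem ha, pow_succ]
    ring

/-- The key weighted subset sum identity. -/
lemma powerset_weight_sum (q : ℕ) (S : Finset ℕ) :
    q ^ (S.card + 1) + ∑ A ∈ S.powerset.filter (fun B => B.Nonempty),
      q ^ (A.card + (S.filter (fun i => ∀ a ∈ A, i < a)).card)
    = q * (q + 1) ^ S.card := by
  induction S using Finset.strongInduction with
  | _ S ih =>
    rcases S.eq_empty_or_nonempty with rfl | hS
    · simp
    · set s0 := S.min' hS with hs0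
      have hs0S : s0 ∈ S := S.min'_mem hS
      set S' : Finset ℕ := S.erase s0 with hS'
      have hsub : S' ⊂ S := Finset.erase_ssubset hs0S
      have hcard : S.card = S'.card + 1 := by
        rw [hS', Finset.card_erase_of_mem hs0S]
        have := Finset.card_pos.mpr hS
        omega
      have hmin : ∀ x ∈ S, s0 ≤ x := fun x hx => S.min'_le x hx
      rw [← Finset.sum_filter_add_sum_filter_not
        (S.powerset.filter (fun B => B.Nonempty)) (fun A => s0 ∈ A)]
      -- first sum : subsets containing s0
      have e1 : ∑ A ∈ (S.powerset.filter (fun B => B.Nonempty)).filter (fun A => s0 ∈ A),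
          q ^ (A.card + (S.filter (fun i => ∀ a ∈ A, i < a)).card)
          = ∑ B ∈ S'.powerset, q ^ (B.card + 1) := by
        refine Finset.sum_bij' (fun A _ => A.erase s0) (fun B _ => insert s0 B) ?_ ?_ ?_ ?_ ?_
        · intro A hA
          simp only [Finset.mem_filter, Finset.mem_powerset] at hA
          rw [Finset.mem_powerset, hS']
          exact Finset.erase_subset_erase _ hA.1.1
        · intro B hB
          simp only [Finset.mem_powerset, hS'] at hB
          simp only [Finset.mem_filter, Finset.mem_powerset]
          refine ⟨⟨?_, ⟨s0, Finset.mem_insert_self _ _⟩⟩, Finset.mem_insert_self _ _⟩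
          intro x hx
          rcases Finset.mem_insert.mp hx with rfl | hx
          · exact hs0S
          · exact (Finset.erase_subset _ _) (hB hx)
        · intro A hA
          simp only [Finset.mem_filter] at hA
          exact Finset.insert_erase hA.2
        · intro B hB
          simp only [Finset.mem_powerset, hS'] at hB
          apply Finset.erase_insert
          intro hc
          exact absurd (hB hc) (Finset.notMem_erase _ _)
        · intro A hA
          simp only [Finset.mem_filter, Finset.mem_powerset] at hA
          have hc1 : A.card = (A.erase s0).card + 1 := by
            rw [Finset.card_erase_of_mem hA.2]
            have : 0 < A.card := Finset.card_pos.mpr hA.1.2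
            omega
          have hc2 : S.filter (fun i => ∀ a ∈ A, i < a) = ∅ := by
            rw [Finset.filter_eq_empty_iff]
            intro i hi h
            exact absurd (h s0 hA.2) (by have := hmin i hi; omega)
          rw [hc1, hc2]
          simp
      -- second sum : subsets not containing s0
      have e2 : ∑ A ∈ (S.powerset.filter (fun B => B.Nonempty)).filter (fun A => ¬ s0 ∈ A),
          q ^ (A.card + (S.filter (fun i => ∀ a ∈ A, i < a)).card)
          = q * ∑ A ∈ S'.powerset.filter (fun B => B.Nonempty),
              q ^ (A.card + (S'.filter (fun i => ∀ a ∈ A, i < a)).card) := by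
        have hidx : (S.powerset.filter (fun B => B.Nonempty)).filter (fun A => ¬ s0 ∈ A)
            = S'.powerset.filter (fun B => B.Nonempty) := by
          ext A
          simp only [Finset.mem_filter, Finset.mem_powerset, hS', Finset.subset_erase]
          tauto
        rw [hidx, Finset.mul_sum]
        refine Finset.sum_congr rfl ?_
        intro A hA
        simp only [Finset.mem_filter, Finset.mem_powerset, hS'] at hA
        have hfil : S.filter (fun i => ∀ a ∈ A, i < a)
            = insert s0 (S'.filter (fun i => ∀ a ∈ A, i < a)) := by
          ext i
          simp only [Finset.mem_filter, Finset.mem_insert]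
          constructor
          · rintro ⟨hiS, hcond⟩
            by_cases hie : i = s0
            · exact Or.inl hie
            · exact Or.inr ⟨Finset.mem_erase.mpr ⟨hie, hiS⟩, hcond⟩
          · rintro (rfl | ⟨hiS', hcond⟩)
            · refine ⟨hs0S, ?_⟩
              intro a haA
              have haS' : a ∈ S' := hA.1 haA
              have := Finset.mem_erase.mp haS'
              have := hmin a this.2
              omega
            · exact ⟨(Finset.erase_subset _ _) hiS', hcond⟩
        have hnotmem : s0 ∉ S'.filter (fun i => ∀ a ∈ A, i < a) := by
          intro hc
          exact absurd (Finset.mem_filter.mp hc).1 (Finset.notMem_erase _ _)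
        rw [hfil, Finset.card_insert_of_notMem hnotmem]
        ring
      rw [e1, e2]
      -- arithmetic
      have hps : ∑ B ∈ S'.powerset, q ^ (B.card + 1) = q * (q + 1) ^ S'.card := by
        have : ∑ B ∈ S'.powerset, q ^ (B.card + 1) = q * ∑ B ∈ S'.powerset, q ^ B.card := by
          rw [Finset.mul_sum]
          exact Finset.sum_congr rfl (fun B _ => by ring)
        rw [this, sum_powerset_pow]
      rw [hps]
      have IH := ih S' hsub
      set X := q ^ (S'.card + 1) with hX
      set Y := ∑ A ∈ S'.powerset.filter (fun B => B.Nonempty),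
        q ^ (A.card + (S'.filter (fun i => ∀ a ∈ A, i < a)).card) with hY
      set Z := (q + 1) ^ S'.card with hZ
      rw [hcard]
      have h1 : q ^ (S'.card + 1 + 1) = X * q := by rw [hX]; ring
      have h2 : (q + 1) ^ (S'.card + 1) = Z * (q + 1) := by rw [hZ]; ring
      rw [h1, h2]
      calc X * q + (q * Z + q * Y) = q * (X + Y) + q * Z := by ring
        _ = q * (q * Z) + q * Z := by rw [IH]
        _ = q * (Z * (q + 1)) := by ring

/-! ### Weighted sums over all tableaux -/

namespace PermTableau

/-- Total weight `q ^ (number of unrestricted rows)` over tableaux of size `j`. -/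
noncomputable def Gsum (j q : ℕ) : ℕ := ∑ T : PermTableau j, q ^ T.US.card

/-- Weight restricted to tableaux with a corner at `k`. -/
noncomputable def Cnt (k j q : ℕ) : ℕ :=
  ∑ T : PermTableau j, if T.south k ∧ ¬ T.south (k + 1) then q ^ T.US.card else 0

lemma inner_sum_addCol (m q : ℕ) (T : PermTableau m) :
    ∑ a : {A : Finset ℕ // A ∈ T.US.powerset.filter (fun B => B.Nonempty)},
      q ^ (addCol T a.1 a.2).US.card
    = ∑ A ∈ T.US.powerset.filter (fun B => B.Nonempty),
      q ^ (A.card + (T.US.filter (fun i => ∀ a ∈ A, i < a)).card) := by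
  rw [← Finset.sum_attach (T.US.powerset.filter (fun B => B.Nonempty))
      (fun A => q ^ (A.card + (T.US.filter (fun i => ∀ a ∈ A, i < a)).card))]
  rw [show (Finset.univ : Finset {A : Finset ℕ // A ∈ T.US.powerset.filter (fun B => B.Nonempty)})
      = (T.US.powerset.filter (fun B => B.Nonempty)).attach from by
    ext x; simp [Finset.mem_attach]]
  refine Finset.sum_congr rfl ?_
  rintro ⟨A, hA⟩ _
  rw [US_addCol_card]

lemma Gsum_succ (j q : ℕ) (hj : 1 ≤ j) : Gsum (j + 1) q = q * Gsum j (q + 1) := by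
  rw [Gsum, sum_glue hj (fun T => q ^ T.US.card), Gsum, Finset.mul_sum]
  refine Finset.sum_congr rfl ?_
  intro T _
  rw [US_addRow_card, inner_sum_addCol]
  exact powerset_weight_sum q T.US

set_option maxHeartbeats 1000000 in
lemma Cnt_succ (k m q : ℕ) (hm : k + 1 ≤ m) : Cnt k (m + 1) q = q * Cnt k m (q + 1) := by
  rw [Cnt, sum_glue (by omega : 1 ≤ m)
    (fun T => if T.south k ∧ ¬ T.south (k + 1) then q ^ T.US.card else 0),
    Cnt, Finset.mul_sum]
  refine Finset.sum_congr rfl ?_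
  intro T _
  have hiff1 : ((addRow T).south k ∧ ¬ (addRow T).south (k + 1))
      ↔ (T.south k ∧ ¬ T.south (k + 1)) := by
    rw [south_addRow, south_addRow]
  have hiff2 : ∀ a : {A : Finset ℕ // A ∈ T.US.powerset.filter (fun B => B.Nonempty)},
      ((addCol T a.1 a.2).south k ∧ ¬ (addCol T a.1 a.2).south (k + 1))
      ↔ (T.south k ∧ ¬ T.south (k + 1)) := by
    rintro ⟨A, hA⟩
    rw [south_addCol T A hA (by omega), south_addCol T A hA (by omega)]
  by_cases hP : T.south k ∧ ¬ T.south (k + 1)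
  · rw [if_pos (hiff1.mpr hP), if_pos hP]
    have : ∀ a : {A : Finset ℕ // A ∈ T.US.powerset.filter (fun B : Finset ℕ => B.Nonempty)},
        (if (addCol T a.1 a.2).south k ∧ ¬ (addCol T a.1 a.2).south (k + 1)
          then q ^ (addCol T a.1 a.2).US.card else 0) = q ^ (addCol T a.1 a.2).US.card := by
      intro a
      rw [if_pos ((hiff2 a).mpr hP)]
    rw [Finset.sum_congr rfl (fun a _ => this a)]
    rw [US_addRow_card, inner_sum_addCol]
    exact powerset_weight_sum q T.US
  · rw [if_neg (fun hc => hP (hiff1.mp hc)), if_neg hP]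
    have : ∀ a : {A : Finset ℕ // A ∈ T.US.powerset.filter (fun B : Finset ℕ => B.Nonempty)},
        (if (addCol T a.1 a.2).south k ∧ ¬ (addCol T a.1 a.2).south (k + 1)
          then q ^ (addCol T a.1 a.2).US.card else 0) = 0 := by
      intro a
      rw [if_neg (fun hc => hP ((hiff2 a).mp hc))]
    rw [Finset.sum_congr rfl (fun a _ => this a)]
    simp

end PermTableau
namespace PermTableau

/-- The unique permutation tableau of size 1. -/
def T1 : PermTableau 1 where
  shape := ⊥
  rows := 1
  rows_pos := one_pos
  rows_ge := by
    have : (⊥ : YoungDiagram).colLen 0 = 0 := by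
      apply colLen_eq_of
      intro i
      simp [YoungDiagram.notMem_bot]
    omega
  half := by
    have : (⊥ : YoungDiagram).rowLen 0 = 0 :=
      rowLen_eq_zero_of (YoungDiagram.notMem_bot _)
    omega
  filling := fun _ => false
  support := fun _ _ => rfl
  col_one := by
    intro j hj
    have : (⊥ : YoungDiagram).rowLen 0 = 0 :=
      rowLen_eq_zero_of (YoungDiagram.notMem_bot _)
    omega
  avoid := by
    intro i j hmem
    exact absurd hmem (YoungDiagram.notMem_bot _)

lemma size_one_rows (T : PermTableau 1) : T.rows = 1 := by
  have := T.half; have := T.rows_pos; omega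

lemma size_one_rowLen (T : PermTableau 1) : T.shape.rowLen 0 = 0 := by
  have := T.half; have := T.rows_pos; omega

instance : Subsingleton (PermTableau 1) := by
  constructor
  intro T S
  have hshape : ∀ R : PermTableau 1, ∀ c : ℕ × ℕ, c ∉ R.shape := by
    intro R ⟨i, j⟩ hc
    have h1 := YoungDiagram.mem_iff_lt_rowLen.mp hc
    have h2 := R.shape.rowLen_anti 0 i (Nat.zero_le i)
    have := size_one_rowLen R
    omega
  refine ext' ?_ ?_ ?_
  · ext c
    exact iff_of_false (hshape T c) (hshape S c)
  · rw [size_one_rows, size_one_rows]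
  · funext c
    rw [T.support c (hshape T c), S.support c (hshape S c)]

lemma size_one_south (T : PermTableau 1) : T.south 1 := ⟨0, by omega⟩

lemma size_one_US (T : PermTableau 1) : T.US = {0} := by
  ext i
  rw [mem_US, size_one_rows]
  constructor
  · rintro ⟨h1, _⟩
    simp only [Finset.mem_singleton]
    omega
  · intro h
    simp only [Finset.mem_singleton] at h
    subst h
    refine ⟨one_pos, ?_⟩
    intro j _ _ i' hi'
    omega

lemma Gsum_one (q : ℕ) : Gsum 1 q = q := by
  rw [Gsum, Fintype.sum_subsingleton _ T1, size_one_US]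
  simp

/-- Sum of a weight over tableaux whose last edge is a south step. -/
lemma sum_south_last (j : ℕ) (hj : 1 ≤ j) (w : ℕ → ℕ) :
    ∑ T : PermTableau (j + 1), (if T.south (j + 1) then w T.US.card else 0)
      = ∑ T' : PermTableau j, w (T'.US.card + 1) := by
  rw [sum_glue hj (fun T => if T.south (j + 1) then w T.US.card else 0)]
  refine Finset.sum_congr rfl ?_
  intro T _
  rw [if_pos (south_addRow_last T), US_addRow_card]
  have hz : ∀ a : {A : Finset ℕ // A ∈ T.US.powerset.filter (fun B : Finset ℕ => B.Nonempty)},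
      (if (addCol T a.1 a.2).south (j + 1) then w (addCol T a.1 a.2).US.card else 0) = 0 := by
    rintro ⟨A, hA⟩
    rw [if_neg (south_addCol_last T A hA)]
  rw [Finset.sum_congr rfl (fun a _ => hz a)]
  simp

set_option maxHeartbeats 1000000 in
lemma Cnt_base (j q : ℕ) (hj : 1 ≤ j) :
    Cnt (j + 1) (j + 2) q + q ^ 2 * Gsum j q = q * (q + 1) * Gsum j (q + 1) := by
  have step1 : Cnt (j + 1) (j + 2) q
      + ∑ T : PermTableau (j + 1), (if T.south (j + 1) then q ^ (T.US.card + 1) else 0)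
      = ∑ T : PermTableau (j + 1), (if T.south (j + 1) then q * (q + 1) ^ T.US.card else 0) := by
    rw [Cnt, show ((j:ℕ) + 2) = (j + 1) + 1 from rfl,
      sum_glue (by omega : 1 ≤ j + 1)
        (fun T => if T.south (j + 1) ∧ ¬ T.south (j + 1 + 1) then q ^ T.US.card else 0),
      ← Finset.sum_add_distrib]
    refine Finset.sum_congr rfl ?_
    intro T _
    have h1 : ¬ ((addRow T).south (j + 1) ∧ ¬ (addRow T).south (j + 1 + 1)) := by
      rintro ⟨_, hc⟩
      exact hc (south_addRow_last T)
    rw [if_neg h1, zero_add]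
    have h2 : ∀ a : {A : Finset ℕ // A ∈ T.US.powerset.filter (fun B : Finset ℕ => B.Nonempty)},
        (if (addCol T a.1 a.2).south (j + 1) ∧ ¬ (addCol T a.1 a.2).south (j + 1 + 1)
          then q ^ (addCol T a.1 a.2).US.card else 0)
        = (if T.south (j + 1) then q ^ (addCol T a.1 a.2).US.card else 0) := by
      rintro ⟨A, hA⟩
      by_cases hs : T.south (j + 1)
      · rw [if_pos, if_pos hs]
        exact ⟨(south_addCol T A hA (by omega)).mpr hs, south_addCol_last T A hA⟩
      · rw [if_neg, if_neg hs]
        rintro ⟨hc, _⟩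
        exact hs ((south_addCol T A hA (by omega)).mp hc)
    rw [Finset.sum_congr rfl (fun a _ => h2 a)]
    by_cases hs : T.south (j + 1)
    · simp only [if_pos hs]
      rw [inner_sum_addCol]
      have := powerset_weight_sum q T.US
      linarith [this]
    · simp only [if_neg hs]
      simp
  have e1 : ∑ T : PermTableau (j + 1), (if T.south (j + 1) then q ^ (T.US.card + 1) else 0)
      = q ^ 2 * Gsum j q := by
    rw [sum_south_last j hj (fun u => q ^ (u + 1)), Gsum, Finset.mul_sum]
    exact Finset.sum_congr rfl (fun T _ => by ring)
  have e2 : ∑ T : PermTableau (j + 1), (if T.south (j + 1) then q * (q + 1) ^ T.US.card else 0)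
      = q * (q + 1) * Gsum j (q + 1) := by
    rw [sum_south_last j hj (fun u => q * (q + 1) ^ u), Gsum, Finset.mul_sum]
    exact Finset.sum_congr rfl (fun T _ => by ring)
  rw [← e1, ← e2]
  exact step1

set_option maxHeartbeats 1000000 in
lemma Cnt_one (q : ℕ) : Cnt 1 2 q = q := by
  have step1 : Cnt 1 2 q + q ^ 2 = q * (q + 1) := by
    rw [Cnt, show (2:ℕ) = 1 + 1 from rfl,
      sum_glue (le_refl 1) (fun T => if T.south 1 ∧ ¬ T.south 2 then q ^ T.US.card else 0),
      Fintype.sum_subsingleton _ T1]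
    have h1 : ¬ ((addRow T1).south 1 ∧ ¬ (addRow T1).south 2) := by
      rintro ⟨_, hc⟩
      exact hc (south_addRow_last T1)
    rw [if_neg h1, zero_add]
    have h2 : ∀ a : {A : Finset ℕ // A ∈ T1.US.powerset.filter (fun B : Finset ℕ => B.Nonempty)},
        (if (addCol T1 a.1 a.2).south 1 ∧ ¬ (addCol T1 a.1 a.2).south 2
          then q ^ (addCol T1 a.1 a.2).US.card else 0) = q ^ (addCol T1 a.1 a.2).US.card := by
      rintro ⟨A, hA⟩
      rw [if_pos]
      exact ⟨(south_addCol T1 A hA (le_refl 1)).mpr (size_one_south T1),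
        south_addCol_last T1 A hA⟩
    rw [Finset.sum_congr rfl (fun a _ => h2 a), inner_sum_addCol]
    have := powerset_weight_sum q T1.US
    rw [size_one_US] at this ⊢
    simp only [Finset.card_singleton, pow_one] at this
    linarith [this]
  have : q * (q + 1) = q ^ 2 + q := by ring
  omega

lemma Cnt_chain (k q j : ℕ) : Cnt k (k + 1 + j) q
    = (∏ i ∈ Finset.range j, (q + i)) * Cnt k (k + 1) (q + j) := by
  induction j generalizing q with
  | zero => simp
  | succ j ih =>
    have h1 : k + 1 + (j + 1) = (k + 1 + j) + 1 := by omega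
    rw [h1, Cnt_succ k (k + 1 + j) q (by omega), ih (q + 1)]
    rw [Finset.prod_range_succ']
    have h2 : ∀ i ∈ Finset.range j, q + 1 + i = q + (i + 1) := by intro i _; omega
    rw [Finset.prod_congr rfl h2]
    have h3 : q + 1 + j = q + (j + 1) := by omega
    rw [h3]
    ring

lemma Gsum_eq (j q : ℕ) (hj : 1 ≤ j) : Gsum j q = ∏ i ∈ Finset.range j, (q + i) := by
  induction j, hj using Nat.le_induction generalizing q with
  | base => simp [Gsum_one]
  | succ j hj ih =>
    rw [Gsum_succ j q hj, ih (q + 1), Finset.prod_range_succ']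
    have h2 : ∀ i ∈ Finset.range j, q + 1 + i = q + (i + 1) := by intro i _; omega
    rw [Finset.prod_congr rfl h2]
    ring

lemma fact_prod (b a : ℕ) : a ! * ∏ i ∈ Finset.range b, (a + 1 + i) = (a + b)! := by
  induction b with
  | zero => simp
  | succ b ih =>
    rw [Finset.prod_range_succ, ← mul_assoc, ih]
    have h1 : a + 1 + b = (a + b) + 1 := by omega
    rw [h1, show a + (b + 1) = (a + b) + 1 from by omega, Nat.factorial_succ]
    ring

end PermTableau
end CornerAux

/-- For a uniformly random permutation tableau of size `n` and `1 ≤ k ≤ n - 1`, the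
probability that the `k`-th border edge is a south step and the `(k+1)`-th border
edge is a west step equals `(n - k + 1)/n - (n - k)^2/(n (n - 1))`. -/
theorem corner_probability_permTableau (n k : ℕ) (hk : 1 ≤ k) (hk' : k ≤ n - 1) :
    (Nat.card {T : PermTableau n // T.south k ∧ ¬ T.south (k + 1)} : ℚ) / n ! =
      ((n : ℚ) - k + 1) / n - ((n : ℚ) - k) ^ 2 / ((n : ℚ) * ((n : ℚ) - 1)) := by
  classical
  have hn2 : 2 ≤ n := by
    rcases Nat.lt_or_ge n 2 with h | h
    · interval_cases n <;> omega
    · exact h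
  obtain ⟨a, rfl⟩ : ∃ a, n = a + 2 := ⟨n - 2, by omega⟩
  obtain ⟨d, hd⟩ : ∃ d, k + d = a + 1 := ⟨a + 1 - k, by omega⟩
  have hcard : Nat.card {T : PermTableau (a + 2) // T.south k ∧ ¬ T.south (k + 1)}
      = PermTableau.Cnt k (a + 2) 1 := by
    rw [Nat.card_eq_fintype_card, Fintype.card_subtype, Finset.card_filter,
      PermTableau.Cnt]
    refine Finset.sum_congr rfl ?_
    intro T _
    simp
  have hchain : PermTableau.Cnt k (a + 2) 1 = d ! * PermTableau.Cnt k (k + 1) (d + 1) := by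
    have h1 : a + 2 = k + 1 + d := by omega
    rw [h1, PermTableau.Cnt_chain, show 1 + d = d + 1 from Nat.add_comm 1 d]
    congr 1
    rw [← Finset.prod_range_add_one_eq_factorial]
    exact Finset.prod_congr rfl (fun i _ => by omega)
  have hNat : d ! * PermTableau.Cnt k (k + 1) (d + 1) + (d + 1) ^ 2 * a !
      = (d + 2) * (a + 1)! := by
    rcases Nat.lt_or_ge k 2 with hk2 | hk2
    · have hk1 : k = 1 := by omega
      subst hk1
      have hda : d = a := by omega
      subst hda
      rw [PermTableau.Cnt_one, Nat.factorial_succ]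
      ring
    · obtain ⟨e, rfl⟩ : ∃ e, k = e + 2 := ⟨k - 2, by omega⟩
      have hbase := PermTableau.Cnt_base (e + 1) (d + 1) (by omega)
      have hA : d ! * PermTableau.Gsum (e + 1) (d + 1) = a ! := by
        rw [PermTableau.Gsum_eq _ _ (by omega), PermTableau.fact_prod (e + 1) d,
          show d + (e + 1) = a from by omega]
      have hB : (d + 1) * d ! * PermTableau.Gsum (e + 1) (d + 2) = (a + 1)! := by
        rw [PermTableau.Gsum_eq _ _ (by omega)]
        have h1 : ∀ i ∈ Finset.range (e + 1), (d + 2 + i) = (d + 1 + 1 + i) := by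
          intro i _; omega
        rw [Finset.prod_congr rfl h1, ← Nat.factorial_succ, PermTableau.fact_prod (e + 1) (d + 1),
          show d + 1 + (e + 1) = a + 1 from by omega]
      calc d ! * PermTableau.Cnt (e + 2) (e + 2 + 1) (d + 1) + (d + 1) ^ 2 * a !
          = d ! * PermTableau.Cnt (e + 2) (e + 2 + 1) (d + 1)
            + (d + 1) ^ 2 * (d ! * PermTableau.Gsum (e + 1) (d + 1)) := by rw [hA]
        _ = d ! * (PermTableau.Cnt (e + 2) (e + 1 + 2) (d + 1)
            + (d + 1) ^ 2 * PermTableau.Gsum (e + 1) (d + 1)) := by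
            rw [show e + 1 + 2 = e + 2 + 1 from by omega]; ring
        _ = d ! * ((d + 1) * (d + 1 + 1) * PermTableau.Gsum (e + 1) (d + 1 + 1)) := by
            rw [hbase]
        _ = (d + 2) * ((d + 1) * d ! * PermTableau.Gsum (e + 1) (d + 2)) := by
            rw [show d + 1 + 1 = d + 2 from by omega]; ring
        _ = (d + 2) * (a + 1)! := by rw [hB]
  have hval : ((Nat.card {T : PermTableau (a + 2) // T.south k ∧ ¬ T.south (k + 1)} : ℕ) : ℚ)
      = ((d : ℚ) + 2) * ((a + 1)! : ℚ) - ((d : ℚ) + 1) ^ 2 * (a ! : ℚ) := by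
    rw [hcard, hchain]
    have hcast := congrArg (fun x : ℕ => (x : ℚ)) hNat
    push_cast at hcast
    push_cast
    linarith [hcast]
  have hkq : (k : ℚ) = (a : ℚ) + 1 - d := by
    have hcast := congrArg (fun x : ℕ => (x : ℚ)) hd
    push_cast at hcast
    linarith [hcast]
  have hfact1 : (((a + 1)! : ℕ) : ℚ) = ((a : ℚ) + 1) * (a ! : ℚ) := by
    rw [Nat.factorial_succ]
    push_cast
    ring
  have hfact2 : (((a + 2)! : ℕ) : ℚ) = ((a : ℚ) + 2) * (((a : ℚ) + 1) * (a ! : ℚ)) := by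
    rw [show a + 2 = (a + 1) + 1 from rfl, Nat.factorial_succ]
    push_cast
    rw [hfact1]
    ring
  have ha0 : (a ! : ℚ) ≠ 0 := Nat.cast_ne_zero.mpr (Nat.factorial_ne_zero a)
  have h1 : (a : ℚ) + 1 ≠ 0 := by positivity
  have h2 : (a : ℚ) + 2 ≠ 0 := by positivity
  rw [hval, hfact2, hfact1, hkq]
  push_cast
  have h3 : (a : ℚ) + 2 - ((a : ℚ) + 1 - d) = (d : ℚ) + 1 := by ring
  rw [h3]
  have h5 : ((a : ℚ) + 2) * ((a : ℚ) + 2 - 1) = ((a : ℚ) + 2) * ((a : ℚ) + 1) := by ring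
  rw [h5]
  rw [div_sub_div _ _ h2 (mul_ne_zero h2 h1), div_eq_div_iff (by positivity) (by positivity)]
  ring
end

section
/- The expected number of corners in a uniformly random permutation tableau of size n equals (n+4)/6 − 1/n; equivalently, the total number of corners over all permutation tableaux of size n equals n!·((n+4)/6 − 1/n). -/
open scoped BigOperators
open Nat

-- === basics ===

theorem PermTableau.ext'_s4 {n} {T1 T2 : PermTableau n}
    (hs : T1.shape = T2.shape) (hr : T1.rows = T2.rows)
    (hf : T1.filling = T2.filling) : T1 = T2 := by
  cases T1; cases T2; simp_all

theorem PermTableau.rows_le_s4 {n} (T : PermTableau n) : T.rows ≤ n := by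
  have := T.half; omega

theorem PermTableau.cell_lt {n} (T : PermTableau n) {i j : ℕ} (h : (i, j) ∈ T.shape) :
    i < n ∧ j < n := by
  have h1 : i < T.shape.colLen 0 := by
    rw [← YoungDiagram.mem_iff_lt_colLen]
    exact T.shape.up_left_mem (le_refl i) (Nat.zero_le j) h
  have h2 : j < T.shape.rowLen 0 := by
    rw [← YoungDiagram.mem_iff_lt_rowLen]
    exact T.shape.up_left_mem (Nat.zero_le i) (le_refl j) h
  have := T.half; have := T.rows_ge; have := T.rows_pos
  constructor <;> omega

instance PermTableau.finite (n : ℕ) : Finite (PermTableau n) := by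
  have : Function.Injective (fun T : PermTableau n =>
      ((⟨T.rows, Nat.lt_succ_of_le T.rows_le_s4⟩,
        fun c : Fin n × Fin n => ((c.1.1, c.2.1) ∈ T.shape.cells, T.filling (c.1.1, c.2.1))) :
        Fin (n+1) × ((Fin n × Fin n) → Bool × Bool))) := by
    intro T1 T2 h
    simp only [Prod.mk.injEq, Fin.mk.injEq] at h
    obtain ⟨hr, hfun⟩ := h
    have hshape : T1.shape = T2.shape := by
      ext ⟨i, j⟩
      by_cases hb : i < n ∧ j < n
      · have := congrFun hfun (⟨i, hb.1⟩, ⟨j, hb.2⟩)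
        have := congrArg Prod.fst this
        simpa [YoungDiagram.mem_cells, decide_eq_decide] using this
      · constructor <;> intro hm
        · exact absurd (T1.cell_lt hm) hb
        · exact absurd (T2.cell_lt hm) hb
    refine PermTableau.ext'_s4 hshape hr ?_
    funext c
    obtain ⟨i, j⟩ := c
    by_cases hb : i < n ∧ j < n
    · have := congrFun hfun (⟨i, hb.1⟩, ⟨j, hb.2⟩)
      simpa using congrArg Prod.snd this
    · rw [T1.support _ (fun hm => absurd (T1.cell_lt hm) hb),
        T2.support _ (fun hm => absurd (T2.cell_lt hm) hb)]
  exact Finite.of_injective _ this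

noncomputable instance (n : ℕ) : Fintype (PermTableau n) := Fintype.ofFinite _
-- === size one ===

lemma rowLen_bot (i : ℕ) : (⊥ : YoungDiagram).rowLen i = 0 := by
  have := YoungDiagram.rowLen_eq_card (⊥ : YoungDiagram) (i := i)
  simpa [YoungDiagram.row, YoungDiagram.cells_bot] using this

lemma colLen_bot (j : ℕ) : (⊥ : YoungDiagram).colLen j = 0 := by
  rw [← YoungDiagram.rowLen_transpose]
  have : (⊥ : YoungDiagram).transpose = ⊥ := by
    ext c
    cases c
    simp only [YoungDiagram.mem_cells, YoungDiagram.mem_transpose]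
    constructor
    · intro hm; exact absurd hm (YoungDiagram.notMem_bot _)
    · intro hm; exact absurd hm (YoungDiagram.notMem_bot _)
  rw [this, rowLen_bot]

def T1 : PermTableau 1 where
  shape := ⊥
  rows := 1
  rows_pos := one_pos
  rows_ge := by simp [colLen_bot]
  half := by rw [rowLen_bot]
  filling := fun _ => false
  support := fun _ _ => rfl
  col_one := by intro j hj; rw [rowLen_bot] at hj; omega
  avoid := by intro i j hm; exact absurd hm (YoungDiagram.notMem_bot _)

lemma shape_eq_bot_of_rowLen0 {n : ℕ} (T : PermTableau n) (h : T.shape.rowLen 0 = 0) :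
    T.shape = ⊥ := by
  ext ⟨i, j⟩
  simp only [YoungDiagram.mem_cells]
  constructor
  · intro hm
    have h2 : j < T.shape.rowLen 0 := by
      rw [← YoungDiagram.mem_iff_lt_rowLen]
      exact T.shape.up_left_mem (Nat.zero_le i) (le_refl j) hm
    omega
  · intro hm
    exact absurd hm (YoungDiagram.notMem_bot _)

instance : Unique (PermTableau 1) where
  default := T1
  uniq := by
    intro T
    have hr : T.rows = 1 := by have := T.half; have := T.rows_pos; omega
    have hlen : T.shape.rowLen 0 = 0 := by have := T.half; have := T.rows_pos; omega
    have hsh : T.shape = ⊥ := shape_eq_bot_of_rowLen0 T hlen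
    refine PermTableau.ext'_s4 (by rw [hsh]; rfl) (by rw [hr]; rfl) ?_
    funext c
    exact T.support c (by rw [hsh]; exact YoungDiagram.notMem_bot _)

-- === shiftCol ===

def shiftCells (μ : YoungDiagram) (r : ℕ) : Finset (ℕ × ℕ) :=
  (Finset.range r).image (fun i => (i, 0)) ∪ μ.cells.image (fun c => (c.1, c.2 + 1))

lemma mem_shiftCells (μ : YoungDiagram) (r i j : ℕ) :
    (i, j) ∈ shiftCells μ r ↔ (j = 0 ∧ i < r) ∨ (0 < j ∧ (i, j - 1) ∈ μ) := by
  simp only [shiftCells, Finset.mem_union, Finset.mem_image, Finset.mem_range, Prod.mk.injEq]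
  constructor
  · rintro (⟨a, ha, hai, hj⟩ | ⟨⟨a, b⟩, hab, hai, hbj⟩)
    · exact Or.inl ⟨hj.symm, by omega⟩
    · refine Or.inr ⟨by omega, ?_⟩
      have : i = a ∧ j - 1 = b := by omega
      rw [this.1, this.2]
      exact hab
  · rintro (⟨hj, hi⟩ | ⟨hj, hm⟩)
    · exact Or.inl ⟨i, hi, rfl, hj.symm⟩
    · exact Or.inr ⟨(i, j - 1), hm, rfl, by omega⟩

def shiftCol (μ : YoungDiagram) (r : ℕ) (hr : μ.colLen 0 ≤ r) : YoungDiagram where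
  cells := shiftCells μ r
  isLowerSet := by
    rintro ⟨i, j⟩ ⟨i', j'⟩ ⟨hi : i' ≤ i, hj : j' ≤ j⟩ hm
    rw [Finset.mem_coe, mem_shiftCells] at hm ⊢
    rcases Nat.eq_zero_or_pos j' with hj' | hj'
    · subst hj'
      left
      refine ⟨rfl, ?_⟩
      rcases hm with ⟨hj0, hir⟩ | ⟨hjp, hmem⟩
      · omega
      · have : i < μ.colLen 0 := by
          rw [← YoungDiagram.mem_iff_lt_colLen]
          exact μ.up_left_mem (le_refl _) (Nat.zero_le _) hmem
        omega
    · right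
      refine ⟨hj', ?_⟩
      rcases hm with ⟨hj0, hir⟩ | ⟨hjp, hmem⟩
      · omega
      · exact μ.up_left_mem hi (by omega) hmem

lemma mem_shiftCol_zero {μ : YoungDiagram} {r : ℕ} (hr : μ.colLen 0 ≤ r) (i : ℕ) :
    (i, 0) ∈ shiftCol μ r hr ↔ i < r := by
  rw [show ((i,0) ∈ shiftCol μ r hr) ↔ (i,0) ∈ shiftCells μ r from Iff.rfl, mem_shiftCells]
  simp

lemma mem_shiftCol_succ {μ : YoungDiagram} {r : ℕ} (hr : μ.colLen 0 ≤ r) (i j : ℕ) :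
    (i, j + 1) ∈ shiftCol μ r hr ↔ (i, j) ∈ μ := by
  rw [show ((i,j+1) ∈ shiftCol μ r hr) ↔ (i,j+1) ∈ shiftCells μ r from Iff.rfl, mem_shiftCells]
  simp

lemma rowLen_eq_of_s4 {ν : YoungDiagram} {i m : ℕ} (h : ∀ j, (i, j) ∈ ν ↔ j < m) :
    ν.rowLen i = m := by
  have h1 := h (ν.rowLen i)
  have h2 := h m
  rw [YoungDiagram.mem_iff_lt_rowLen] at h1 h2
  omega

lemma colLen_eq_of_s4 {ν : YoungDiagram} {j m : ℕ} (h : ∀ i, (i, j) ∈ ν ↔ i < m) :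
    ν.colLen j = m := by
  have h1 := h (ν.colLen j)
  have h2 := h m
  rw [YoungDiagram.mem_iff_lt_colLen] at h1 h2
  omega

lemma shiftCol_rowLen {μ : YoungDiagram} {r : ℕ} (hr : μ.colLen 0 ≤ r) (i : ℕ) (hi : i < r) :
    (shiftCol μ r hr).rowLen i = μ.rowLen i + 1 := by
  apply rowLen_eq_of_s4
  intro j
  match j with
  | 0 => simp [mem_shiftCol_zero hr, hi]
  | (k+1) => simp [mem_shiftCol_succ hr, YoungDiagram.mem_iff_lt_rowLen]

lemma shiftCol_colLen_zero {μ : YoungDiagram} {r : ℕ} (hr : μ.colLen 0 ≤ r) :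
    (shiftCol μ r hr).colLen 0 = r := by
  apply colLen_eq_of_s4
  intro i
  exact mem_shiftCol_zero hr i

-- === corners ===

def cornerSet (D : YoungDiagram) : Set (ℕ × ℕ) :=
  {c : ℕ × ℕ | c ∈ D ∧ (c.1 + 1, c.2) ∉ D ∧ (c.1, c.2 + 1) ∉ D}

lemma cornerCount_eq (D : YoungDiagram) : cornerCount D = (cornerSet D).ncard := rfl

lemma cornerSet_finite (D : YoungDiagram) : (cornerSet D).Finite := by
  apply Set.Finite.subset (D.cells.finite_toSet)
  intro c hc
  exact hc.1

lemma mem_shiftCol_one {μ : YoungDiagram} {r : ℕ} (hr : μ.colLen 0 ≤ r) (i : ℕ) :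
    (i, 1) ∈ shiftCol μ r hr ↔ (i, 0) ∈ μ := mem_shiftCol_succ hr i 0

lemma cornerSet_shiftCol {μ : YoungDiagram} {r : ℕ} (hr : μ.colLen 0 ≤ r) (h0 : 0 < r) :
    cornerSet (shiftCol μ r hr) =
      (fun c : ℕ × ℕ => (c.1, c.2 + 1)) '' cornerSet μ ∪
        (if μ.colLen 0 < r then {(r - 1, 0)} else ∅) := by
  ext ⟨i, j⟩
  match j with
  | 0 =>
    by_cases hcl : μ.colLen 0 < r
    · simp only [cornerSet, Set.mem_setOf_eq, Set.mem_union, Set.mem_image, Prod.mk.injEq,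
        mem_shiftCol_zero hr, mem_shiftCol_one hr, if_pos hcl, Set.mem_singleton_iff]
      rw [YoungDiagram.mem_iff_lt_colLen]
      constructor
      · rintro ⟨h1, h2, h3⟩
        exact Or.inr ⟨by omega, trivial⟩
      · rintro (⟨x, hx, hx1, hx2⟩ | ⟨h1, h2⟩)
        · omega
        · subst h1
          refine ⟨by omega, by omega, by omega⟩
    · simp only [cornerSet, Set.mem_setOf_eq, Set.mem_union, Set.mem_image, Prod.mk.injEq,
        mem_shiftCol_zero hr, mem_shiftCol_one hr, if_neg hcl,
        Set.mem_empty_iff_false, or_false]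
      rw [YoungDiagram.mem_iff_lt_colLen]
      constructor
      · rintro ⟨h1, h2, h3⟩
        omega
      · rintro ⟨x, hx, hx1, hx2⟩
        omega
  | (k + 1) =>
    simp only [cornerSet, Set.mem_setOf_eq, Set.mem_union, Set.mem_image, Prod.mk.injEq,
      mem_shiftCol_succ hr]
    constructor
    · rintro ⟨hm, h1, h2⟩
      exact Or.inl ⟨(i, k), ⟨hm, h1, h2⟩, rfl, rfl⟩
    · rintro (⟨⟨a, b⟩, ⟨hc1, hc2, hc3⟩, hab1, hab2⟩ | hite)
      · simp only at hab1 hab2 hc1 hc2 hc3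
        have hb : b = k := by omega
        subst hb; subst hab1
        exact ⟨hc1, hc2, hc3⟩
      · exfalso
        by_cases hcl : μ.colLen 0 < r
        · rw [if_pos hcl] at hite
          simp only [Set.mem_singleton_iff, Prod.mk.injEq] at hite
          omega
        · rw [if_neg hcl] at hite
          exact absurd hite (Set.notMem_empty _)

lemma cornerCount_shiftCol {μ : YoungDiagram} {r : ℕ} (hr : μ.colLen 0 ≤ r) (h0 : 0 < r) :
    cornerCount (shiftCol μ r hr) = cornerCount μ + (if μ.colLen 0 < r then 1 else 0) := by
  rw [cornerCount_eq, cornerCount_eq, cornerSet_shiftCol hr h0]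
  rw [Set.ncard_union_eq ?_ ?_ ?_]
  · congr 1
    · exact Set.ncard_image_of_injective _ (fun a b hab => by
        obtain ⟨a1, a2⟩ := a; obtain ⟨b1, b2⟩ := b
        simp only [Prod.mk.injEq] at hab
        exact Prod.ext hab.1 (by omega))
    · by_cases hcl : μ.colLen 0 < r
      · rw [if_pos hcl, if_pos hcl, Set.ncard_singleton]
      · rw [if_neg hcl, if_neg hcl, Set.ncard_empty]
  · rw [Set.disjoint_left]
    rintro ⟨i, j⟩ hmem hite
    obtain ⟨⟨a, b⟩, hc, hab⟩ := hmem
    simp only [Prod.mk.injEq] at hab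
    by_cases hcl : μ.colLen 0 < r
    · rw [if_pos hcl] at hite
      simp only [Set.mem_singleton_iff, Prod.mk.injEq] at hite
      omega
    · rw [if_neg hcl] at hite
      exact absurd hite (Set.notMem_empty _)
  · exact (cornerSet_finite μ).image _
  · by_cases hcl : μ.colLen 0 < r
    · rw [if_pos hcl]; exact Set.finite_singleton _
    · rw [if_neg hcl]; exact Set.finite_empty

-- === unresFinset ===

noncomputable def unresFinset {n : ℕ} (T : PermTableau n) : Finset ℕ :=
  @Finset.filter _ (fun i => T.unres i) (Classical.decPred _) (Finset.range T.rows)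

lemma mem_unresFinset {n : ℕ} {T : PermTableau n} {i : ℕ} :
    i ∈ unresFinset T ↔ i < T.rows ∧ T.unres i := by
  rw [unresFinset, @Finset.mem_filter _ _ (Classical.decPred _), Finset.mem_range]

lemma U_eq {n : ℕ} (T : PermTableau n) : T.U = (unresFinset T).card := by
  rw [PermTableau.U, ← Set.ncard_coe_finset]
  congr 1
  ext i
  simp only [Set.mem_setOf_eq, Finset.coe_sort_coe, Finset.mem_coe, mem_unresFinset]

lemma unresFinset_subset_range {n : ℕ} (T : PermTableau n) :
    unresFinset T ⊆ Finset.range T.rows := by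
  intro i hi
  rw [Finset.mem_range]
  exact (mem_unresFinset.1 hi).1

-- === addRow ===

def addRow {n : ℕ} (T : PermTableau n) : PermTableau (n + 1) where
  shape := T.shape
  rows := T.rows + 1
  rows_pos := Nat.succ_pos _
  rows_ge := le_trans T.rows_ge (Nat.le_succ _)
  half := by have := T.half; omega
  filling := T.filling
  support := T.support
  col_one := T.col_one
  avoid := T.avoid

lemma addRow_shape {n : ℕ} (T : PermTableau n) : (addRow T).shape = T.shape := rfl

lemma addRow_lre {n : ℕ} (T : PermTableau n) : (addRow T).shape.colLen 0 < (addRow T).rows :=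
  Nat.lt_succ_of_le T.rows_ge

lemma unres_addRow {n : ℕ} (T : PermTableau n) (i : ℕ) :
    (addRow T).unres i ↔ T.unres i := Iff.rfl

lemma unres_of_no_cell {n : ℕ} (T : PermTableau n) (i : ℕ) (h : T.shape.colLen 0 ≤ i) :
    T.unres i := by
  intro j hm
  exfalso
  have : i < T.shape.colLen 0 := by
    rw [← YoungDiagram.mem_iff_lt_colLen]
    exact T.shape.up_left_mem (le_refl i) (Nat.zero_le j) hm
  omega

lemma unresFinset_addRow {n : ℕ} (T : PermTableau n) :
    unresFinset (addRow T) = insert T.rows (unresFinset T) := by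
  ext i
  rw [mem_unresFinset, Finset.mem_insert, mem_unresFinset]
  constructor
  · rintro ⟨hlt, hu⟩
    rcases Nat.lt_succ_iff_lt_or_eq.1 hlt with h | h
    · exact Or.inr ⟨h, hu⟩
    · exact Or.inl h
  · rintro (h | ⟨hlt, hu⟩)
    · subst h
      exact ⟨Nat.lt_succ_self _, unres_of_no_cell _ _ T.rows_ge⟩
    · exact ⟨Nat.lt_succ_of_lt hlt, hu⟩

lemma U_addRow {n : ℕ} (T : PermTableau n) : (addRow T).U = T.U + 1 := by
  rw [U_eq, U_eq, unresFinset_addRow, Finset.card_insert_of_notMem]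
  intro h
  exact absurd ((mem_unresFinset.1 h).1) (lt_irrefl _)

-- === delRow ===

lemma rows_ge_two {n : ℕ} (T : PermTableau (n + 1)) (hn : 1 ≤ n)
    (h : T.shape.colLen 0 < T.rows) : 2 ≤ T.rows := by
  by_contra hc
  have hr1 : T.rows = 1 := by have := T.rows_pos; omega
  have hc0 : T.shape.colLen 0 = 0 := by omega
  have hsh : T.shape.rowLen 0 = 0 := by
    by_contra hne
    have : (0, 0) ∈ T.shape := by
      rw [YoungDiagram.mem_iff_lt_rowLen]
      omega
    rw [YoungDiagram.mem_iff_lt_colLen] at this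
    omega
  have := T.half
  omega

def delRow {n : ℕ} (T : PermTableau (n + 1)) (hn : 1 ≤ n)
    (h : T.shape.colLen 0 < T.rows) : PermTableau n where
  shape := T.shape
  rows := T.rows - 1
  rows_pos := by have := rows_ge_two T hn h; omega
  rows_ge := by omega
  half := by have := T.half; have := T.rows_pos; omega
  filling := T.filling
  support := T.support
  col_one := T.col_one
  avoid := T.avoid

lemma addRow_delRow {n : ℕ} (T : PermTableau (n + 1)) (hn : 1 ≤ n)
    (h : T.shape.colLen 0 < T.rows) : addRow (delRow T hn h) = T := by
  refine PermTableau.ext'_s4 rfl ?_ rfl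
  show T.rows - 1 + 1 = T.rows
  have := T.rows_pos
  omega

lemma delRow_addRow {n : ℕ} (T : PermTableau n) (hn : 1 ≤ n) :
    delRow (addRow T) hn (addRow_lre T) = T := by
  refine PermTableau.ext'_s4 rfl rfl rfl

-- === addCol ===

def colFill {n : ℕ} (T : PermTableau n) (A : Finset ℕ) : ℕ × ℕ → Bool :=
  fun c => if c.2 = 0 then decide (c.1 ∈ A) else T.filling (c.1, c.2 - 1)

lemma colFill_zero {n : ℕ} (T : PermTableau n) (A : Finset ℕ) (i : ℕ) :
    colFill T A (i, 0) = decide (i ∈ A) := by simp [colFill]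

lemma colFill_succ {n : ℕ} (T : PermTableau n) (A : Finset ℕ) (i j : ℕ) :
    colFill T A (i, j + 1) = T.filling (i, j) := by simp [colFill]

def addCol {n : ℕ} (T : PermTableau n) (A : Finset ℕ)
    (hA : A ⊆ unresFinset T ∧ A.Nonempty) : PermTableau (n + 1) where
  shape := shiftCol T.shape T.rows T.rows_ge
  rows := T.rows
  rows_pos := T.rows_pos
  rows_ge := le_of_eq (shiftCol_colLen_zero T.rows_ge)
  half := by
    rw [shiftCol_rowLen T.rows_ge 0 T.rows_pos]
    have := T.half; omega
  filling := colFill T A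
  support := by
    rintro ⟨i, j⟩ hm
    match j with
    | 0 =>
      rw [mem_shiftCol_zero] at hm
      rw [colFill_zero, decide_eq_false_iff_not]
      intro hiA
      exact hm (Finset.mem_range.1 (unresFinset_subset_range T (hA.1 hiA)))
    | (k + 1) =>
      rw [mem_shiftCol_succ] at hm
      rw [colFill_succ]
      exact T.support _ hm
  col_one := by
    intro j hj
    rw [shiftCol_rowLen T.rows_ge 0 T.rows_pos] at hj
    match j with
    | 0 =>
      obtain ⟨i, hi⟩ := hA.2
      exact ⟨i, by rw [colFill_zero, decide_eq_true_iff]; exact hi⟩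
    | (k + 1) =>
      obtain ⟨i, hi⟩ := T.col_one k (by omega)
      exact ⟨i, by rw [colFill_succ]; exact hi⟩
  avoid := by
    intro i j hm hf hex j' hj'
    match j with
    | 0 => omega
    | (k + 1) =>
      rw [mem_shiftCol_succ] at hm
      rw [colFill_succ] at hf
      obtain ⟨i', hi', hfi'⟩ := hex
      match j' with
      | 0 =>
        rw [colFill_zero, decide_eq_false_iff_not]
        intro hiA
        have hu : T.unres i := (mem_unresFinset.1 (hA.1 hiA)).2
        rw [colFill_succ] at hfi'
        have := hu k hm hf i' hi'
        rw [this] at hfi'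
        exact Bool.noConfusion hfi'
      | (l + 1) =>
        rw [colFill_succ]
        rw [colFill_succ] at hfi'
        exact T.avoid i k hm hf ⟨i', hi', hfi'⟩ l (by omega)

lemma addCol_shape {n : ℕ} (T : PermTableau n) (A : Finset ℕ) (hA) :
    (addCol T A hA).shape = shiftCol T.shape T.rows T.rows_ge := rfl

lemma addCol_not_lre {n : ℕ} (T : PermTableau n) (A : Finset ℕ) (hA) :
    ¬ (addCol T A hA).shape.colLen 0 < (addCol T A hA).rows := by
  rw [addCol_shape, shiftCol_colLen_zero]
  exact lt_irrefl _

lemma cornerCount_addCol {n : ℕ} (T : PermTableau n) (A : Finset ℕ) (hA) :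
    cornerCount (addCol T A hA).shape =
      cornerCount T.shape + (if T.shape.colLen 0 < T.rows then 1 else 0) :=
  cornerCount_shiftCol T.rows_ge T.rows_pos

lemma addCol_mem_zero {n : ℕ} {T : PermTableau n} {A : Finset ℕ} {hA} (i : ℕ) :
    (i, 0) ∈ (addCol T A hA).shape ↔ i < T.rows := mem_shiftCol_zero T.rows_ge i

lemma addCol_mem_succ {n : ℕ} {T : PermTableau n} {A : Finset ℕ} {hA} (i j : ℕ) :
    (i, j + 1) ∈ (addCol T A hA).shape ↔ (i, j) ∈ T.shape := mem_shiftCol_succ T.rows_ge i j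

lemma addCol_filling_zero {n : ℕ} {T : PermTableau n} {A : Finset ℕ} {hA} (i : ℕ) :
    (addCol T A hA).filling (i, 0) = decide (i ∈ A) := colFill_zero T A i

lemma addCol_filling_succ {n : ℕ} {T : PermTableau n} {A : Finset ℕ} {hA} (i j : ℕ) :
    (addCol T A hA).filling (i, j + 1) = T.filling (i, j) := colFill_succ T A i j

lemma unres_addCol {n : ℕ} (T : PermTableau n) (A : Finset ℕ) (hA) (i : ℕ) (hi : i < T.rows) :
    (addCol T A hA).unres i ↔ (i ∈ A ∨ (T.unres i ∧ ∀ a ∈ A, i ≤ a)) := by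
  constructor
  · intro hu
    by_cases hiA : i ∈ A
    · exact Or.inl hiA
    · refine Or.inr ⟨?_, ?_⟩
      · intro j hm hf i' hi'
        have := hu (j + 1) ((addCol_mem_succ i j).2 hm)
          (by rw [addCol_filling_succ]; exact hf) i' hi'
        rwa [addCol_filling_succ] at this
      · intro a ha
        by_contra hc
        push_neg at hc
        have := hu 0 ((addCol_mem_zero i).2 hi)
          (by rw [addCol_filling_zero, decide_eq_false_iff_not]; exact hiA) a hc
        rw [addCol_filling_zero, decide_eq_false_iff_not] at this
        exact this ha
  · intro h
    intro j hm hf i' hi'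
    match j with
    | 0 =>
      rw [addCol_filling_zero, decide_eq_false_iff_not] at hf
      rcases h with hiA | ⟨hu, hle⟩
      · exact absurd hiA hf
      · rw [addCol_filling_zero, decide_eq_false_iff_not]
        intro hi'A
        have := hle i' hi'A
        omega
    | (k + 1) =>
      rw [addCol_mem_succ] at hm
      rw [addCol_filling_succ] at hf
      rw [addCol_filling_succ]
      have hu : T.unres i := by
        rcases h with hiA | ⟨hu, _⟩
        · exact (mem_unresFinset.1 (hA.1 hiA)).2
        · exact hu
      exact hu k hm hf i' hi'

lemma unresFinset_addCol {n : ℕ} (T : PermTableau n) (A : Finset ℕ) (hA) :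
    unresFinset (addCol T A hA) =
      A ∪ (unresFinset T).filter (fun x => ∀ a ∈ A, x < a) := by
  ext i
  rw [mem_unresFinset, Finset.mem_union, Finset.mem_filter]
  constructor
  · rintro ⟨hlt, hu⟩
    rw [show (addCol T A hA).rows = T.rows from rfl] at hlt
    rw [unres_addCol T A hA i hlt] at hu
    rcases hu with hiA | ⟨hu, hle⟩
    · exact Or.inl hiA
    · by_cases hiA : i ∈ A
      · exact Or.inl hiA
      · refine Or.inr ⟨mem_unresFinset.2 ⟨hlt, hu⟩, ?_⟩
        intro a ha
        have h1 : i ≤ a := hle a ha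
        have h2 : i ≠ a := fun h => hiA (h ▸ ha)
        omega
  · intro h
    have hlt : i < T.rows := by
      rcases h with hiA | ⟨hmem, _⟩
      · exact Finset.mem_range.1 (unresFinset_subset_range T (hA.1 hiA))
      · exact (mem_unresFinset.1 hmem).1
    refine ⟨hlt, ?_⟩
    rw [unres_addCol T A hA i hlt]
    rcases h with hiA | ⟨hmem, hltall⟩
    · exact Or.inl hiA
    · exact Or.inr ⟨(mem_unresFinset.1 hmem).2, fun a ha => le_of_lt (hltall a ha)⟩

lemma U_addCol {n : ℕ} (T : PermTableau n) (A : Finset ℕ) (hA) :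
    (addCol T A hA).U =
      A.card + ((unresFinset T).filter (fun x => ∀ a ∈ A, x < a)).card := by
  rw [U_eq, unresFinset_addCol, Finset.card_union_of_disjoint]
  rw [Finset.disjoint_left]
  intro a haA haf
  rw [Finset.mem_filter] at haf
  exact absurd (haf.2 a haA) (lt_irrefl a)

-- === unshift and delCol ===

def unshiftCells (D : YoungDiagram) : Finset (ℕ × ℕ) :=
  (D.cells.filter (fun c => 0 < c.2)).image (fun c => (c.1, c.2 - 1))

lemma mem_unshiftCells (D : YoungDiagram) (i j : ℕ) :
    (i, j) ∈ unshiftCells D ↔ (i, j + 1) ∈ D := by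
  simp only [unshiftCells, Finset.mem_image, Finset.mem_filter, YoungDiagram.mem_cells,
    Prod.mk.injEq]
  constructor
  · rintro ⟨⟨a, b⟩, ⟨hab, hb⟩, hai, hbj⟩
    simp only at hai hbj hb
    have : b = j + 1 := by omega
    subst this; subst hai
    exact hab
  · intro h
    exact ⟨(i, j + 1), ⟨h, by omega⟩, rfl, by omega⟩

def unshift (D : YoungDiagram) : YoungDiagram where
  cells := unshiftCells D
  isLowerSet := by
    rintro ⟨i, j⟩ ⟨i', j'⟩ ⟨hi : i' ≤ i, hj : j' ≤ j⟩ hm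
    rw [Finset.mem_coe, mem_unshiftCells] at hm ⊢
    exact D.up_left_mem hi (by omega) hm

lemma mem_unshift (D : YoungDiagram) (i j : ℕ) :
    (i, j) ∈ unshift D ↔ (i, j + 1) ∈ D := mem_unshiftCells D i j

def delCol {n : ℕ} (T : PermTableau (n + 1)) (h : T.shape.colLen 0 = T.rows) :
    PermTableau n where
  shape := unshift T.shape
  rows := T.rows
  rows_pos := T.rows_pos
  rows_ge := by
    by_contra hc
    push_neg at hc
    have : (T.rows, 0) ∈ unshift T.shape := by
      rw [YoungDiagram.mem_iff_lt_colLen]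
      exact hc
    rw [mem_unshift] at this
    have : (T.rows, 0) ∈ T.shape := T.shape.up_left_mem (le_refl _) (by omega) this
    rw [YoungDiagram.mem_iff_lt_colLen, h] at this
    omega
  half := by
    have h00 : (0, 0) ∈ T.shape := by
      rw [YoungDiagram.mem_iff_lt_colLen, h]
      exact T.rows_pos
    have hlen : 0 < T.shape.rowLen 0 := by
      rw [← YoungDiagram.mem_iff_lt_rowLen]
      exact h00
    have hrl : (unshift T.shape).rowLen 0 = T.shape.rowLen 0 - 1 := by
      apply rowLen_eq_of_s4
      intro j
      rw [mem_unshift, YoungDiagram.mem_iff_lt_rowLen]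
      omega
    have := T.half
    omega
  filling := fun c => T.filling (c.1, c.2 + 1)
  support := by
    rintro ⟨i, j⟩ hm
    rw [mem_unshift] at hm
    exact T.support _ hm
  col_one := by
    intro j hj
    have hrl : (unshift T.shape).rowLen 0 = T.shape.rowLen 0 - 1 := by
      apply rowLen_eq_of_s4
      intro j'
      rw [mem_unshift, YoungDiagram.mem_iff_lt_rowLen]
      omega
    rw [hrl] at hj
    exact T.col_one (j + 1) (by omega)
  avoid := by
    intro i j hm hf hex j' hj'
    rw [mem_unshift] at hm
    exact T.avoid i (j + 1) hm hf hex (j' + 1) (by omega)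

def onesA {n : ℕ} (T : PermTableau n) : Finset ℕ :=
  (Finset.range T.rows).filter (fun i => T.filling (i, 0) = true)

lemma mem_onesA {n : ℕ} {T : PermTableau n} {i : ℕ} :
    i ∈ onesA T ↔ i < T.rows ∧ T.filling (i, 0) = true := by
  rw [onesA, Finset.mem_filter, Finset.mem_range]

lemma onesA_nonempty {n : ℕ} (T : PermTableau (n + 1)) (h : T.shape.colLen 0 = T.rows) :
    (onesA T).Nonempty := by
  have h00 : (0, 0) ∈ T.shape := by
    rw [YoungDiagram.mem_iff_lt_colLen, h]
    exact T.rows_pos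
  have hlen : 0 < T.shape.rowLen 0 := by
    rw [← YoungDiagram.mem_iff_lt_rowLen]
    exact h00
  obtain ⟨i, hi⟩ := T.col_one 0 hlen
  refine ⟨i, mem_onesA.2 ⟨?_, hi⟩⟩
  have : (i, 0) ∈ T.shape := by
    by_contra hc
    rw [T.support _ hc] at hi
    exact Bool.noConfusion hi
  rw [YoungDiagram.mem_iff_lt_colLen, h] at this
  exact this

lemma onesA_subset {n : ℕ} (T : PermTableau (n + 1)) (h : T.shape.colLen 0 = T.rows) :
    onesA T ⊆ unresFinset (delCol T h) := by
  intro i hi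
  obtain ⟨hlt, hfill⟩ := mem_onesA.1 hi
  rw [mem_unresFinset]
  refine ⟨hlt, ?_⟩
  intro j hm hf i' hi'
  rw [show (delCol T h).shape = unshift T.shape from rfl, mem_unshift] at hm
  show T.filling (i', j + 1) = false
  cases hb : T.filling (i', j + 1) with
  | false => rfl
  | true =>
    exfalso
    have := T.avoid i (j + 1) hm hf ⟨i', hi', hb⟩ 0 (Nat.succ_pos _)
    rw [this] at hfill
    exact Bool.noConfusion hfill

-- === round trips ===

lemma onesA_addCol {n : ℕ} (T : PermTableau n) (A : Finset ℕ) (hA) :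
    onesA (addCol T A hA) = A := by
  ext i
  rw [mem_onesA]
  rw [show (addCol T A hA).rows = T.rows from rfl]
  constructor
  · rintro ⟨hlt, hf⟩
    rw [addCol_filling_zero, decide_eq_true_eq] at hf
    exact hf
  · intro hiA
    refine ⟨Finset.mem_range.1 (unresFinset_subset_range T (hA.1 hiA)), ?_⟩
    rw [addCol_filling_zero, decide_eq_true_eq]
    exact hiA

lemma addCol_colLen {n : ℕ} (T : PermTableau n) (A : Finset ℕ) (hA) :
    (addCol T A hA).shape.colLen 0 = (addCol T A hA).rows :=
  shiftCol_colLen_zero T.rows_ge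

lemma delCol_addCol {n : ℕ} (T : PermTableau n) (A : Finset ℕ) (hA) (h) :
    delCol (addCol T A hA) h = T := by
  refine PermTableau.ext'_s4 ?_ rfl ?_
  · ext ⟨i, j⟩
    rw [YoungDiagram.mem_cells, YoungDiagram.mem_cells]
    rw [show (delCol (addCol T A hA) h).shape = unshift (addCol T A hA).shape from rfl,
      mem_unshift, addCol_mem_succ]
  · funext ⟨i, j⟩
    show (addCol T A hA).filling (i, j + 1) = T.filling (i, j)
    rw [addCol_filling_succ]

lemma addCol_delCol {n : ℕ} (T : PermTableau (n + 1)) (h : T.shape.colLen 0 = T.rows) (hA) :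
    addCol (delCol T h) (onesA T) hA = T := by
  refine PermTableau.ext'_s4 ?_ rfl ?_
  · ext ⟨i, j⟩
    rw [YoungDiagram.mem_cells, YoungDiagram.mem_cells]
    match j with
    | 0 =>
      rw [addCol_mem_zero, show (delCol T h).rows = T.rows from rfl,
        YoungDiagram.mem_iff_lt_colLen, h]
    | (k + 1) =>
      rw [addCol_mem_succ, show (delCol T h).shape = unshift T.shape from rfl, mem_unshift]
  · funext ⟨i, j⟩
    match j with
    | 0 =>
      show colFill (delCol T h) (onesA T) (i, 0) = T.filling (i, 0)
      rw [colFill_zero]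
      cases hf : T.filling (i, 0) with
      | true =>
        have hm : (i, 0) ∈ T.shape := by
          by_contra hc
          rw [T.support _ hc] at hf
          exact Bool.noConfusion hf
        rw [YoungDiagram.mem_iff_lt_colLen, h] at hm
        rw [decide_eq_true_eq]
        exact mem_onesA.2 ⟨hm, hf⟩
      | false =>
        rw [decide_eq_false_iff_not]
        intro hmem
        rw [(mem_onesA.1 hmem).2] at hf
        exact Bool.noConfusion hf
    | (k + 1) =>
      show colFill (delCol T h) (onesA T) (i, k + 1) = T.filling (i, k + 1)
      rw [colFill_succ]
      rfl

-- === decomposition ===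

abbrev ExtSet {n : ℕ} (T : PermTableau n) : Type :=
  {A : Finset ℕ // A ⊆ unresFinset T ∧ A.Nonempty}

noncomputable instance {n : ℕ} (T : PermTableau n) : Fintype (ExtSet T) :=
  Fintype.subtype ((unresFinset T).powerset.filter (fun A => A.Nonempty)) (by
    intro A
    rw [Finset.mem_filter, Finset.mem_powerset])

lemma sigma_ext_helper {n : ℕ} {T T' : PermTableau n} (A : ExtSet T) (A' : ExtSet T')
    (h : T = T') (h2 : A.1 = A'.1) : (⟨T, A⟩ : Σ S : PermTableau n, ExtSet S) = ⟨T', A'⟩ := by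
  subst h
  obtain ⟨a, pa⟩ := A
  obtain ⟨a', pa'⟩ := A'
  simp only at h2
  subst h2
  rfl

noncomputable def decompEquiv (n : ℕ) (hn : 1 ≤ n) :
    (PermTableau n ⊕ (Σ T : PermTableau n, ExtSet T)) ≃ PermTableau (n + 1) where
  toFun := Sum.elim addRow (fun p => addCol p.1 p.2.1 p.2.2)
  invFun := fun T =>
    if h : T.shape.colLen 0 < T.rows then .inl (delRow T hn h)
    else
      .inr ⟨delCol T (le_antisymm T.rows_ge (not_lt.1 h)),
        ⟨onesA T, ⟨onesA_subset T (le_antisymm T.rows_ge (not_lt.1 h)),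
          onesA_nonempty T (le_antisymm T.rows_ge (not_lt.1 h))⟩⟩⟩
  left_inv := by
    rintro (T | ⟨T, A⟩)
    · dsimp only [Sum.elim_inl]
      rw [dif_pos (addRow_lre T)]
      rw [delRow_addRow T hn]
    · dsimp only [Sum.elim_inr]
      rw [dif_neg (addCol_not_lre T A.1 A.2)]
      congr 1
      exact sigma_ext_helper _ _ (delCol_addCol T A.1 A.2 _) (onesA_addCol T A.1 A.2)
  right_inv := by
    intro T
    dsimp only
    by_cases h : T.shape.colLen 0 < T.rows
    · rw [dif_pos h]
      exact addRow_delRow T hn h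
    · rw [dif_neg h]
      have heq : T.shape.colLen 0 = T.rows := le_antisymm T.rows_ge (not_lt.1 h)
      exact addCol_delCol T heq ⟨onesA_subset T heq, onesA_nonempty T heq⟩

lemma sum_decomp {n : ℕ} (hn : 1 ≤ n) (F : PermTableau (n + 1) → ℚ) :
    ∑ T : PermTableau (n + 1), F T =
      ∑ T : PermTableau n, (F (addRow T) + ∑ A : ExtSet T, F (addCol T A.1 A.2)) := by
  rw [← Equiv.sum_comp (decompEquiv n hn) F]
  rw [Fintype.sum_sum_type]
  simp only [decompEquiv, Equiv.coe_fn_mk, Sum.elim_inl, Sum.elim_inr]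
  rw [← Finset.univ_sigma_univ, Finset.sum_sigma]
  rw [← Finset.sum_add_distrib]

-- === powerset sums ===

lemma pow_card_sum (S : Finset ℕ) (m : ℚ) :
    ∑ A ∈ S.powerset, m ^ A.card = (m + 1) ^ S.card := by
  induction S using Finset.induction_on with
  | empty => simp
  | @insert a s ha ih =>
    rw [Finset.sum_powerset_insert ha, ih, Finset.card_insert_of_notMem ha]
    have : ∑ A ∈ s.powerset, m ^ (insert a A).card = ∑ A ∈ s.powerset, m * m ^ A.card := by
      apply Finset.sum_congr rfl
      intro A hA
      rw [Finset.mem_powerset] at hA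
      rw [Finset.card_insert_of_notMem (fun h => ha (hA h)), pow_succ]
      ring
    rw [this, ← Finset.mul_sum, ih]
    ring

lemma keysum : ∀ (k : ℕ) (S : Finset ℕ), S.card = k → ∀ (m : ℚ),
    ∑ A ∈ S.powerset.filter (fun A => A.Nonempty),
      m ^ (A.card + (S.filter (fun x => ∀ a ∈ A, x < a)).card) =
      m * ((m + 1) ^ S.card - m ^ S.card) := by
  intro k
  induction k with
  | zero =>
    intro S hS m
    rw [Finset.card_eq_zero] at hS
    subst hS
    rw [Finset.powerset_empty]
    rw [show ({∅} : Finset (Finset ℕ)).filter (fun A => A.Nonempty) = ∅ by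
      rw [Finset.filter_eq_empty_iff]
      intro A hA
      rw [Finset.mem_singleton] at hA
      subst hA
      exact fun h => Finset.not_nonempty_empty h]
    simp
  | succ k ih =>
    intro S hS m
    have hne : S.Nonempty := by
      rw [← Finset.card_pos, hS]; exact Nat.succ_pos _
    set s0 := S.min' hne with hs0
    have hs0S : s0 ∈ S := S.min'_mem hne
    set S' := S.erase s0 with hS'
    have hcard : S'.card = k := by
      rw [hS', Finset.card_erase_of_mem hs0S, hS]
      omega
    rw [← Finset.sum_filter_add_sum_filter_not (S.powerset.filter (fun A => A.Nonempty))
      (fun A => s0 ∈ A)]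
    have part1 : ∑ A ∈ (S.powerset.filter (fun A => A.Nonempty)).filter (fun A => s0 ∈ A),
        m ^ (A.card + (S.filter (fun x => ∀ a ∈ A, x < a)).card) =
        m * (m + 1) ^ k := by
      have hbij : ∑ A ∈ (S.powerset.filter (fun A => A.Nonempty)).filter (fun A => s0 ∈ A),
          m ^ (A.card + (S.filter (fun x => ∀ a ∈ A, x < a)).card) =
          ∑ B ∈ S'.powerset, m ^ (B.card + 1) := by
        apply Finset.sum_nbij' (i := fun A => A.erase s0) (j := fun B => insert s0 B)
        · intro A hA
          simp only [Finset.mem_filter, Finset.mem_powerset] at hA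
          rw [Finset.mem_powerset, hS']
          exact Finset.erase_subset_erase _ hA.1.1
        · intro B hB
          rw [Finset.mem_powerset] at hB
          simp only [Finset.mem_filter, Finset.mem_powerset]
          refine ⟨⟨?_, ⟨s0, Finset.mem_insert_self _ _⟩⟩, Finset.mem_insert_self _ _⟩
          apply Finset.insert_subset hs0S
          exact le_trans hB (Finset.erase_subset _ _)
        · intro A hA
          simp only [Finset.mem_filter] at hA
          exact Finset.insert_erase hA.2
        · intro B hB
          rw [Finset.mem_powerset] at hB
          apply Finset.erase_insert
          intro hs0B
          exact (Finset.notMem_erase s0 S) (hB hs0B)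
        · intro A hA
          simp only [Finset.mem_filter, Finset.mem_powerset] at hA
          have hc : A.card = (A.erase s0).card + 1 := by
            rw [Finset.card_erase_of_mem hA.2]
            have : 0 < A.card := Finset.card_pos.2 hA.1.2
            omega
          have hflt : S.filter (fun x => ∀ a ∈ A, x < a) = ∅ := by
            rw [Finset.filter_eq_empty_iff]
            intro x hx hall
            have h1 := hall s0 hA.2
            have h2 := S.min'_le x hx
            rw [← hs0] at h2
            omega
          rw [hflt, Finset.card_empty, add_zero, hc]
      rw [hbij]
      have : ∑ B ∈ S'.powerset, m ^ (B.card + 1) = m * ∑ B ∈ S'.powerset, m ^ B.card := by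
        rw [Finset.mul_sum]
        apply Finset.sum_congr rfl
        intro B hB
        rw [pow_succ]
        ring
      rw [this, pow_card_sum, hcard]
    have part2 : ∑ A ∈ (S.powerset.filter (fun A => A.Nonempty)).filter (fun A => ¬ s0 ∈ A),
        m ^ (A.card + (S.filter (fun x => ∀ a ∈ A, x < a)).card) =
        m * (m * ((m + 1) ^ k - m ^ k)) := by
      have hset : (S.powerset.filter (fun A => A.Nonempty)).filter (fun A => ¬ s0 ∈ A) =
          S'.powerset.filter (fun A => A.Nonempty) := by
        ext A
        simp only [Finset.mem_filter, Finset.mem_powerset, hS', Finset.subset_erase]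
        tauto
      rw [hset]
      have hterm : ∀ A ∈ S'.powerset.filter (fun A => A.Nonempty),
          m ^ (A.card + (S.filter (fun x => ∀ a ∈ A, x < a)).card) =
          m * m ^ (A.card + (S'.filter (fun x => ∀ a ∈ A, x < a)).card) := by
        intro A hA
        simp only [Finset.mem_filter, Finset.mem_powerset] at hA
        have hsub : A ⊆ S' := hA.1
        have hfs : S.filter (fun x => ∀ a ∈ A, x < a) =
            insert s0 (S'.filter (fun x => ∀ a ∈ A, x < a)) := by
          ext x
          simp only [Finset.mem_filter, Finset.mem_insert, hS', Finset.mem_erase]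
          constructor
          · rintro ⟨hxS, hall⟩
            by_cases hx : x = s0
            · exact Or.inl hx
            · exact Or.inr ⟨⟨hx, hxS⟩, hall⟩
          · rintro (hx | ⟨⟨hxne, hxS⟩, hall⟩)
            · subst hx
              refine ⟨hs0S, ?_⟩
              intro a ha
              have haS' : a ∈ S' := hsub ha
              rw [hS', Finset.mem_erase] at haS'
              have := S.min'_le a haS'.2
              rw [← hs0] at this
              have := haS'.1
              omega
            · exact ⟨hxS, hall⟩
        have hnotmem : s0 ∉ S'.filter (fun x => ∀ a ∈ A, x < a) := by
          intro h
          exact Finset.notMem_erase s0 S (Finset.mem_of_mem_filter _ h)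
        rw [hfs, Finset.card_insert_of_notMem hnotmem]
        ring
      rw [Finset.sum_congr rfl hterm, ← Finset.mul_sum, ih S' hcard m, hcard]
    rw [part1, part2, hS]
    ring

-- === the three statistics sums ===

lemma extsum {n : ℕ} (T : PermTableau n) (f : Finset ℕ → ℚ) :
    ∑ A : ExtSet T, f A.1 =
      ∑ A ∈ (unresFinset T).powerset.filter (fun A => A.Nonempty), f A :=
  (Finset.sum_subtype _ (fun A => by rw [Finset.mem_filter, Finset.mem_powerset]) f).symm

lemma U_T1 : T1.U = 1 := by
  rw [PermTableau.U]
  have : {i | i < T1.rows ∧ T1.unres i} = {0} := by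
    ext i
    simp only [Set.mem_setOf_eq, Set.mem_singleton_iff]
    constructor
    · rintro ⟨hi, -⟩
      have h1 : T1.rows = 1 := rfl
      omega
    · intro h
      subst h
      exact ⟨Nat.one_pos, fun j hm => absurd hm (YoungDiagram.notMem_bot _)⟩
  rw [this, Set.ncard_singleton]

lemma cornerCount_bot : cornerCount (⊥ : YoungDiagram) = 0 := by
  rw [cornerCount_eq]
  have : cornerSet (⊥ : YoungDiagram) = ∅ := by
    ext c
    simp only [cornerSet, Set.mem_setOf_eq, Set.mem_empty_iff_false, iff_false]
    rintro ⟨hm, -⟩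
    exact YoungDiagram.notMem_bot _ hm
  rw [this, Set.ncard_empty]

noncomputable def Psum (n m : ℕ) : ℚ := ∑ T : PermTableau n, (m : ℚ) ^ T.U

noncomputable def Asum (n m : ℕ) : ℚ :=
  ∑ T : PermTableau n,
    (if T.shape.colLen 0 < T.rows then (1 : ℚ) else 0) * (m : ℚ) ^ T.U

noncomputable def Qsum (n m : ℕ) : ℚ :=
  ∑ T : PermTableau n, (cornerCount T.shape : ℚ) * (m : ℚ) ^ T.U

lemma Psum_one (m : ℕ) : Psum 1 m = m := by
  rw [Psum, Fintype.sum_unique]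
  rw [show (default : PermTableau 1) = T1 from rfl, U_T1, pow_one]

lemma Asum_one (m : ℕ) : Asum 1 m = m := by
  rw [Asum, Fintype.sum_unique]
  rw [show (default : PermTableau 1) = T1 from rfl, U_T1, pow_one]
  rw [if_pos]
  · ring
  · rw [show T1.shape = (⊥ : YoungDiagram) from rfl, colLen_bot]
    exact T1.rows_pos

lemma Qsum_one (m : ℕ) : Qsum 1 m = 0 := by
  rw [Qsum, Fintype.sum_unique]
  rw [show (default : PermTableau 1) = T1 from rfl,
    show T1.shape = (⊥ : YoungDiagram) from rfl, cornerCount_bot]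
  simp

lemma key_inner {n : ℕ} (T : PermTableau n) (m : ℕ) :
    ∑ A : ExtSet T, (m : ℚ) ^ (addCol T A.1 A.2).U =
      (m : ℚ) * (((m : ℚ) + 1) ^ T.U - (m : ℚ) ^ T.U) := by
  have h1 : ∀ A : ExtSet T, (m : ℚ) ^ (addCol T A.1 A.2).U =
      (fun B : Finset ℕ =>
        (m : ℚ) ^ (B.card + ((unresFinset T).filter (fun x => ∀ a ∈ B, x < a)).card)) A.1 := by
    intro A
    rw [U_addCol]
  rw [Fintype.sum_congr _ _ h1, U_eq]
  exact (extsum T _).trans (keysum _ _ rfl (m : ℚ))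

lemma Psum_rec (n m : ℕ) (hn : 1 ≤ n) : Psum (n + 1) m = m * Psum n (m + 1) := by
  rw [Psum, sum_decomp hn (fun T => (m : ℚ) ^ T.U), Psum, Finset.mul_sum]
  apply Finset.sum_congr rfl
  intro T _
  rw [U_addRow, key_inner T m, pow_succ]
  push_cast
  ring

lemma Asum_rec (n m : ℕ) (hn : 1 ≤ n) : Asum (n + 1) m = m * Psum n m := by
  rw [Asum, sum_decomp hn
    (fun T => (if T.shape.colLen 0 < T.rows then (1 : ℚ) else 0) * (m : ℚ) ^ T.U),
    Psum, Finset.mul_sum]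
  apply Finset.sum_congr rfl
  intro T _
  have h1 : (if (addRow T).shape.colLen 0 < (addRow T).rows then (1 : ℚ) else 0) = 1 :=
    if_pos (addRow_lre T)
  have h2 : ∀ A : ExtSet T,
      (if (addCol T A.1 A.2).shape.colLen 0 < (addCol T A.1 A.2).rows then (1 : ℚ) else 0) *
        (m : ℚ) ^ (addCol T A.1 A.2).U = 0 := by
    intro A
    rw [if_neg (addCol_not_lre T A.1 A.2), zero_mul]
  rw [Fintype.sum_congr _ _ h2, Finset.sum_const_zero, h1, U_addRow, pow_succ]
  ring

lemma Qsum_rec (n m : ℕ) (hn : 1 ≤ n) :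
    Qsum (n + 1) m = m * Qsum n (m + 1) + m * (Asum n (m + 1) - Asum n m) := by
  rw [Qsum, sum_decomp hn (fun T => (cornerCount T.shape : ℚ) * (m : ℚ) ^ T.U),
    Qsum, Asum, Asum, ← Finset.sum_sub_distrib, Finset.mul_sum, Finset.mul_sum,
    ← Finset.sum_add_distrib]
  apply Finset.sum_congr rfl
  intro T _
  have key : ∑ A : ExtSet T,
      (cornerCount (addCol T A.1 A.2).shape : ℚ) * (m : ℚ) ^ (addCol T A.1 A.2).U =
      ((cornerCount T.shape : ℚ) + (if T.shape.colLen 0 < T.rows then (1 : ℚ) else 0)) *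
        ((m : ℚ) * (((m : ℚ) + 1) ^ T.U - (m : ℚ) ^ T.U)) := by
    have h1 : ∀ A : ExtSet T,
        (cornerCount (addCol T A.1 A.2).shape : ℚ) * (m : ℚ) ^ (addCol T A.1 A.2).U =
        ((cornerCount T.shape : ℚ) + (if T.shape.colLen 0 < T.rows then (1 : ℚ) else 0)) *
          ((fun B : Finset ℕ =>
            (m : ℚ) ^ (B.card + ((unresFinset T).filter (fun x => ∀ a ∈ B, x < a)).card)) A.1) := by
      intro A
      rw [U_addCol, cornerCount_addCol]
      congr 1
      rw [Nat.cast_add]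
      congr 1
      split_ifs <;> simp
    rw [Fintype.sum_congr _ _ h1, ← Finset.mul_sum, U_eq]
    congr 1
    exact (extsum T _).trans (keysum _ _ rfl (m : ℚ))
  rw [key, U_addRow, show (addRow T).shape = T.shape from rfl, pow_succ]
  split_ifs with h <;> push_cast <;> ring

-- === closed forms ===

noncomputable def RF (n m : ℕ) : ℚ := ∏ i ∈ Finset.range n, ((m : ℚ) + (i : ℚ))

noncomputable def En (n m : ℕ) : ℚ :=
  ∑ i ∈ Finset.range (n - 1), (((m : ℚ) + (n : ℚ) - ((i : ℚ) + 1)) * ((i : ℚ) + 1) - 1)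

lemma RF_zero (m : ℕ) : RF 0 m = 1 := by rw [RF, Finset.range_zero, Finset.prod_empty]

lemma RF_one_n (m : ℕ) : RF 1 m = m := by
  rw [RF, Finset.prod_range_one, Nat.cast_zero, add_zero]

lemma RF_succ (n m : ℕ) : RF (n + 1) m = m * RF n (m + 1) := by
  rw [RF, Finset.prod_range_succ', RF]
  have h : ∀ i ∈ Finset.range n, ((m : ℚ) + ((i + 1 : ℕ) : ℚ)) = (((m + 1 : ℕ) : ℚ) + (i : ℚ)) := by
    intro i _
    push_cast
    ring
  rw [Finset.prod_congr rfl h]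
  push_cast
  ring

lemma RF_succ' (n m : ℕ) : RF (n + 1) m = RF n m * ((m : ℚ) + (n : ℚ)) := by
  rw [RF, Finset.prod_range_succ, RF]

lemma En_succ (k m : ℕ) : En (k + 2) m = En (k + 1) (m + 1) + ((m : ℚ) + 1) * ((k : ℚ) + 1) - 1 := by
  rw [En, En, show k + 2 - 1 = k + 1 from rfl, show k + 1 - 1 = k from rfl]
  rw [Finset.sum_range_succ]
  have h : ∀ i ∈ Finset.range k,
      (((m : ℚ) + ((k + 2 : ℕ) : ℚ) - ((i : ℚ) + 1)) * ((i : ℚ) + 1) - 1) =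
      ((((m + 1 : ℕ) : ℚ) + ((k + 1 : ℕ) : ℚ) - ((i : ℚ) + 1)) * ((i : ℚ) + 1) - 1) := by
    intro i _
    push_cast
    ring
  rw [Finset.sum_congr rfl h]
  push_cast
  ring

lemma master : ∀ k : ℕ, ∀ m : ℕ,
    (Psum (k + 1) m = RF (k + 1) m) ∧
    (Asum (k + 1) m = m * RF k m) ∧
    (Qsum (k + 1) m * (((m : ℚ) + (k : ℚ) - 1) * ((m : ℚ) + (k : ℚ))) =
      RF (k + 1) m * En (k + 1) m) := by
  intro k
  induction k with
  | zero =>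
    intro m
    refine ⟨?_, ?_, ?_⟩
    · rw [Psum_one, RF_one_n]
    · rw [Asum_one, RF_zero, mul_one]
    · rw [Qsum_one, zero_mul, En, Nat.sub_self, Finset.range_zero, Finset.sum_empty, mul_zero]
  | succ k ih =>
    intro m
    have hP : Psum (k + 2) m = RF (k + 2) m := by
      rw [Psum_rec (k + 1) m (Nat.le_add_left _ _), (ih (m + 1)).1, RF_succ (k + 1) m]
    refine ⟨hP, ?_, ?_⟩
    · rw [Asum_rec (k + 1) m (Nat.le_add_left _ _), (ih m).1]
    · rw [Qsum_rec (k + 1) m (Nat.le_add_left _ _)]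
      have h3 := (ih (m + 1)).2.2
      have hA1 := (ih (m + 1)).2.1
      have hA0 := (ih m).2.1
      have hBC : RF k m * ((m : ℚ) + (k : ℚ)) = (m : ℚ) * RF k (m + 1) := by
        rw [← RF_succ' k m, RF_succ k m]
      rw [hA1, hA0, En_succ k m]
      have hRF2 : RF (k + 2) m = (m : ℚ) * (RF k (m + 1) * (((m + 1 : ℕ) : ℚ) + (k : ℚ))) := by
        rw [RF_succ (k + 1) m, RF_succ' k (m + 1)]
      have hRF1 : RF (k + 1) (m + 1) = RF k (m + 1) * (((m + 1 : ℕ) : ℚ) + (k : ℚ)) :=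
        RF_succ' k (m + 1)
      rw [hRF1] at h3
      rw [hRF2]
      push_cast at h3 hBC ⊢
      set B := RF k (m + 1) with hB
      set C := RF k m with hC
      set Q := Qsum (k + 1) (m + 1) with hQ
      set E := En (k + 1) (m + 1) with hE
      linear_combination ((m : ℚ)) * h3 -
        (m : ℚ) ^ 2 * ((m : ℚ) + (k : ℚ) + 1) * hBC

lemma sum_id (k : ℕ) : ∑ i ∈ Finset.range k, (i : ℚ) = k * ((k : ℚ) - 1) / 2 := by
  induction k with
  | zero => simp
  | succ k ih =>
    rw [Finset.sum_range_succ, ih]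
    push_cast
    ring

lemma sum_sq (k : ℕ) :
    ∑ i ∈ Finset.range k, (i : ℚ) ^ 2 = k * ((k : ℚ) - 1) * (2 * (k : ℚ) - 1) / 6 := by
  induction k with
  | zero => simp
  | succ k ih =>
    rw [Finset.sum_range_succ, ih]
    push_cast
    ring

lemma En_one (k : ℕ) : 6 * En (k + 1) 1 = (k : ℚ) * ((k : ℚ) ^ 2 + 6 * (k : ℚ) - 1) := by
  rw [En, show k + 1 - 1 = k from rfl]
  have h : ∀ i ∈ Finset.range k,
      ((((1 : ℕ) : ℚ) + ((k + 1 : ℕ) : ℚ) - ((i : ℚ) + 1)) * ((i : ℚ) + 1) - 1) =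
      (-((i : ℚ) ^ 2) + ((k : ℚ) * (i : ℚ) + (k : ℚ))) := by
    intro i _
    push_cast
    ring
  rw [Finset.sum_congr rfl h, Finset.sum_add_distrib, Finset.sum_add_distrib,
    ← Finset.mul_sum, sum_id, Finset.sum_neg_distrib, sum_sq, Finset.sum_const,
    Finset.card_range, nsmul_eq_mul]
  ring

lemma RF_one (n : ℕ) : RF n 1 = (n ! : ℚ) := by
  rw [RF]
  have h : ∀ i ∈ Finset.range n, (((1 : ℕ) : ℚ) + (i : ℚ)) = (((i + 1 : ℕ)) : ℚ) := by
    intro i _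
    push_cast
    ring
  rw [Finset.prod_congr rfl h, ← Nat.cast_prod, Finset.prod_range_add_one_eq_factorial]

/-- The expected number of corners in a uniformly random permutation tableau of size
`n` equals `(n + 4)/6 - 1/n`; equivalently, the total number of corners over all
permutation tableaux of size `n` equals `n ! * ((n + 4)/6 - 1/n)`. -/
theorem expected_corners_permTableau (n : ℕ) (hn : 2 ≤ n) :
    (∑ᶠ T : PermTableau n, (cornerCount T.shape : ℚ)) / n ! =
        ((n : ℚ) + 4) / 6 - 1 / n ∧
      (∑ᶠ T : PermTableau n, (cornerCount T.shape : ℚ)) =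
        (n ! : ℚ) * (((n : ℚ) + 4) / 6 - 1 / n) := by
  obtain ⟨k, rfl⟩ : ∃ k, n = k + 1 := ⟨n - 1, by omega⟩
  have hk : 1 ≤ k := by omega
  have hfin : (∑ᶠ T : PermTableau (k + 1), (cornerCount T.shape : ℚ)) = Qsum (k + 1) 1 := by
    rw [finsum_eq_sum_of_fintype, Qsum]
    apply Finset.sum_congr rfl
    intro T _
    rw [Nat.cast_one, one_pow, mul_one]
  have hQ := (master k 1).2.2
  rw [RF_one] at hQ
  have hE := En_one k
  have hk0 : (k : ℚ) ≠ 0 := Nat.cast_ne_zero.mpr (by omega)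
  have hk1 : ((k : ℚ) + 1) ≠ 0 := by positivity
  have hF : (((k + 1)! : ℕ) : ℚ) ≠ 0 := Nat.cast_ne_zero.mpr (Nat.factorial_ne_zero _)
  have h6 : Qsum (k + 1) 1 * (6 * ((k : ℚ) + 1)) * (k : ℚ) =
      (((k + 1)! : ℕ) : ℚ) * ((k : ℚ) * ((k : ℚ) ^ 2 + 6 * (k : ℚ) - 1)) := by
    push_cast at hQ
    linear_combination 6 * hQ + (((k + 1)! : ℕ) : ℚ) * hE
  have h7 : Qsum (k + 1) 1 * (6 * ((k : ℚ) + 1)) =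
      (((k + 1)! : ℕ) : ℚ) * ((k : ℚ) ^ 2 + 6 * (k : ℚ) - 1) := by
    apply mul_right_cancel₀ hk0
    linear_combination h6
  have hmain : (∑ᶠ T : PermTableau (k + 1), (cornerCount T.shape : ℚ)) =
      ((k + 1)! : ℚ) * ((((k + 1 : ℕ) : ℚ) + 4) / 6 - 1 / ((k + 1 : ℕ) : ℚ)) := by
    rw [hfin]
    have hk1' : ((k + 1 : ℕ) : ℚ) ≠ 0 := by push_cast; exact hk1
    field_simp
    push_cast at h7 ⊢
    linear_combination h7
  refine ⟨?_, hmain⟩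
  rw [hmain]
  exact mul_div_cancel_left₀ _ hF
end
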